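/- arXiv:1207.4533 — 2 statements merged into one kernel-verified Lean document; each statement's English description precedes it below -/
import Mathlib

section
/- For integers s and odd i, the centralizer in G of a^s u^i equals ⟨a^2, u⟩ if s is even and ⟨a^2, au⟩ if s is odd; in either case it is an abelian normal subgroup of G of index 4. -/
namespace ZkDl

def n₁ (l : ℕ) : ℕ := 2 ^ (l - 1) + 1
def n₂ (l : ℕ) : ℕ := 2 ^ (l - 1) - 1

/-- The relations of the presentation
`⟨a, u, v | a^(2^l) = u^k = v^2 = 1, u a u⁻¹ = a^(n₁), v a v = a^(n₂), v u v = u⁻¹⟩`,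
with generators `a = 0`, `u = 1`, `v = 2` in `Fin 3`. -/
def rels (l k : ℕ) : Set (FreeGroup (Fin 3)) :=
  { FreeGroup.of 0 ^ 2 ^ l,
    FreeGroup.of 1 ^ k,
    FreeGroup.of 2 ^ 2,
    FreeGroup.of 1 * FreeGroup.of 0 * (FreeGroup.of 1)⁻¹ * (FreeGroup.of 0 ^ n₁ l)⁻¹,
    FreeGroup.of 2 * FreeGroup.of 0 * FreeGroup.of 2 * (FreeGroup.of 0 ^ n₂ l)⁻¹,
    FreeGroup.of 2 * FreeGroup.of 1 * FreeGroup.of 2 * FreeGroup.of 1 }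

/-- The group `Z_{2^l} ⋊ D_k` given by the presentation above. -/
abbrev G (l k : ℕ) : Type := PresentedGroup (rels l k)

def a (l k : ℕ) : G l k := PresentedGroup.of 0
def u (l k : ℕ) : G l k := PresentedGroup.of 1
def v (l k : ℕ) : G l k := PresentedGroup.of 2

variable (l k : ℕ)

lemma rel_mk {r : FreeGroup (Fin 3)} (hr : r ∈ rels l k) :
    PresentedGroup.mk (rels l k) r = 1 :=
  (QuotientGroup.eq_one_iff _).2 (Subgroup.subset_normalClosure hr)

lemma a_pow : a l k ^ (2 ^ l) = 1 := by
  have := rel_mk l k (show FreeGroup.of 0 ^ 2 ^ l ∈ rels l k from Set.mem_insert _ _)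
  simpa [map_pow, a, PresentedGroup.of] using this

lemma u_pow : u l k ^ k = 1 := by
  have := rel_mk l k (show FreeGroup.of 1 ^ k ∈ rels l k by
    right; exact Set.mem_insert _ _)
  simpa [map_pow, u, PresentedGroup.of] using this

lemma v_sq : v l k * v l k = 1 := by
  have := rel_mk l k (show FreeGroup.of 2 ^ 2 ∈ rels l k by
    right; right; exact Set.mem_insert _ _)
  simpa [map_pow, sq, v, PresentedGroup.of] using this

lemma uau : u l k * a l k * (u l k)⁻¹ = a l k ^ (n₁ l) := by
  have := rel_mk l k (show FreeGroup.of 1 * FreeGroup.of 0 * (FreeGroup.of 1)⁻¹ *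
      (FreeGroup.of 0 ^ n₁ l)⁻¹ ∈ rels l k by
    right; right; right; exact Set.mem_insert _ _)
  simp only [map_mul, map_inv, map_pow] at this
  rw [mul_inv_eq_one] at this
  exact this

lemma vav : v l k * a l k * v l k = a l k ^ (n₂ l) := by
  have := rel_mk l k (show FreeGroup.of 2 * FreeGroup.of 0 * FreeGroup.of 2 *
      (FreeGroup.of 0 ^ n₂ l)⁻¹ ∈ rels l k by
    right; right; right; right; exact Set.mem_insert _ _)
  simp only [map_mul, map_inv, map_pow] at this
  rw [mul_inv_eq_one] at this
  exact this

lemma vuv : v l k * u l k * v l k = (u l k)⁻¹ := by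
  have := rel_mk l k (show FreeGroup.of 2 * FreeGroup.of 1 * FreeGroup.of 2 *
      FreeGroup.of 1 ∈ rels l k by
    right; right; right; right; right; rfl)
  simp only [map_mul] at this
  rw [← eq_inv_iff_mul_eq_one] at this
  exact this

lemma v_inv : (v l k)⁻¹ = v l k := by
  rw [inv_eq_iff_mul_eq_one, v_sq]


lemma apow_congr {m n : ℤ} (h : ((2:ℤ)^l) ∣ m - n) : a l k ^ m = a l k ^ n := by
  obtain ⟨t, ht⟩ := h
  have hm : m = n + 2 ^ l * t := by linarith
  have h1 : (a l k) ^ ((2:ℤ)^l) = 1 := by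
    rw [show ((2:ℤ)^l) = ((2^l : ℕ) : ℤ) by push_cast; ring, zpow_natCast, a_pow]
  rw [hm, zpow_add, zpow_mul, h1, one_zpow, mul_one]

lemma u_conj (m : ℤ) : u l k * a l k ^ m * (u l k)⁻¹ = a l k ^ (m * n₁ l) := by
  rw [← conj_zpow, uau, ← zpow_natCast (a l k) (n₁ l), ← zpow_mul, mul_comm]

lemma v_conj_a (m : ℤ) : v l k * a l k ^ m * v l k = a l k ^ (m * n₂ l) := by
  have h : v l k * a l k * (v l k)⁻¹ = a l k ^ (n₂ l) := by rw [v_inv]; exact vav l k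
  rw [show v l k * a l k ^ m * v l k = v l k * a l k ^ m * (v l k)⁻¹ by rw [v_inv],
    ← conj_zpow, h, ← zpow_natCast (a l k) (n₂ l), ← zpow_mul, mul_comm]

lemma v_conj_u (m : ℤ) : v l k * u l k ^ m * v l k = u l k ^ (-m) := by
  have h : v l k * u l k * (v l k)⁻¹ = (u l k)⁻¹ := by rw [v_inv]; exact vuv l k
  rw [show v l k * u l k ^ m * v l k = v l k * u l k ^ m * (v l k)⁻¹ by rw [v_inv],
    ← conj_zpow, h]
  group

lemma u_push (m : ℤ) : u l k * a l k ^ m = a l k ^ (m * n₁ l) * u l k := by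
  rw [← u_conj]; group

lemma v_push_a (m : ℤ) : v l k * a l k ^ m = a l k ^ (m * n₂ l) * v l k := by
  have := v_conj_a l k m
  calc v l k * a l k ^ m = (v l k * a l k ^ m * v l k) * v l k := by
        rw [mul_assoc, v_sq, mul_one]
    _ = a l k ^ (m * n₂ l) * v l k := by rw [this]

lemma v_push_u (m : ℤ) : v l k * u l k ^ m = u l k ^ (-m) * v l k := by
  have := v_conj_u l k m
  calc v l k * u l k ^ m = (v l k * u l k ^ m * v l k) * v l k := by
        rw [mul_assoc, v_sq, mul_one]
    _ = u l k ^ (-m) * v l k := by rw [this]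

lemma n1_cast : ((n₁ l : ℕ) : ℤ) = 2 ^ (l - 1) + 1 := by
  simp only [n₁]; push_cast; ring

lemma n2_cast : ((n₂ l : ℕ) : ℤ) = 2 ^ (l - 1) - 1 := by
  simp [n₂, Nat.cast_sub (Nat.one_le_two_pow)]

lemma n1_sq (hl : 3 ≤ l) : ((2:ℤ)^l) ∣ ((n₁ l : ℤ) * n₁ l - 1) := by
  obtain ⟨c, rfl⟩ : ∃ c, l = c + 3 := ⟨l - 3, by omega⟩
  rw [n1_cast]
  refine ⟨2 ^ (c + 1) + 1, ?_⟩
  have : c + 3 - 1 = c + 2 := by omega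
  rw [this]; ring

lemma n2_sq (hl : 3 ≤ l) : ((2:ℤ)^l) ∣ ((n₂ l : ℤ) * n₂ l - 1) := by
  obtain ⟨c, rfl⟩ : ∃ c, l = c + 3 := ⟨l - 3, by omega⟩
  rw [n2_cast]
  refine ⟨2 ^ (c + 1) - 1, ?_⟩
  have : c + 3 - 1 = c + 2 := by omega
  rw [this]; ring

lemma u2_comm (hl : 3 ≤ l) (m : ℤ) :
    u l k ^ (2:ℤ) * a l k ^ m = a l k ^ m * u l k ^ (2:ℤ) := by
  have h1 : u l k ^ (2:ℤ) * a l k ^ m = a l k ^ (m * n₁ l * n₁ l) * u l k ^ (2:ℤ) := by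
    rw [show (2:ℤ) = 1 + 1 by norm_num, zpow_add, zpow_one, mul_assoc, u_push,
      ← mul_assoc, u_push, mul_assoc]
  rw [h1, apow_congr l k (show ((2:ℤ)^l) ∣ m * n₁ l * n₁ l - m by
    have := n1_sq l hl
    calc ((2:ℤ)^l) ∣ m * ((n₁ l : ℤ) * n₁ l - 1) := Dvd.dvd.mul_left this m
      _ = m * n₁ l * n₁ l - m := by ring)]

lemma upush_even (hl : 3 ≤ l) {y : ℤ} (hy : Even y) (m : ℤ) :
    u l k ^ y * a l k ^ m = a l k ^ m * u l k ^ y := by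
  obtain ⟨q, rfl⟩ : ∃ q, y = 2 * q := by obtain ⟨q, hq⟩ := hy; exact ⟨q, by omega⟩
  rw [zpow_mul]
  have hc : Commute (u l k ^ (2:ℤ)) (a l k ^ m) := u2_comm l k hl m
  exact (hc.zpow_left q).eq

lemma upush_odd (hl : 3 ≤ l) {y : ℤ} (hy : Odd y) (m : ℤ) :
    u l k ^ y * a l k ^ m = a l k ^ (m * n₁ l) * u l k ^ y := by
  obtain ⟨q, rfl⟩ : ∃ q, y = 2 * q + 1 := by obtain ⟨q, hq⟩ := hy; exact ⟨q, by omega⟩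
  have hc : Commute (u l k ^ (2:ℤ)) (a l k ^ (m * n₁ l)) := u2_comm l k hl (m * n₁ l)
  have hc2 := (hc.zpow_left q).eq
  rw [zpow_add, zpow_one, mul_assoc, u_push, ← mul_assoc, ← mul_assoc,
    zpow_mul, hc2]


lemma form_mul_a (hl : 3 ≤ l) (p q m : ℤ) :
    ∃ p' : ℤ, a l k ^ p * u l k ^ q * a l k ^ m = a l k ^ p' * u l k ^ q := by
  rcases Int.even_or_odd q with hq | hq
  · exact ⟨p + m, by rw [mul_assoc, upush_even l k hl hq, ← mul_assoc, ← zpow_add]⟩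
  · exact ⟨p + m * n₁ l, by rw [mul_assoc, upush_odd l k hl hq, ← mul_assoc, ← zpow_add]⟩

lemma normal_form (hl : 3 ≤ l) (g : G l k) :
    ∃ x y : ℤ, g = a l k ^ x * u l k ^ y ∨ g = a l k ^ x * u l k ^ y * v l k := by
  have hT : g ∈ Subgroup.closure (Set.range (PresentedGroup.of : Fin 3 → G l k)) := by
    rw [PresentedGroup.closure_range_of]; trivial
  induction hT using Subgroup.closure_induction_right with
  | one => exact ⟨0, 0, Or.inl (by simp)⟩
  | mul_right g hg w hw ih =>
    obtain ⟨j, rfl⟩ := hw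
    obtain ⟨x, y, hg' | hg'⟩ := ih <;> subst hg' <;> fin_cases j
    · obtain ⟨p', hp'⟩ := form_mul_a l k hl x y 1
      refine ⟨p', y, Or.inl ?_⟩
      calc a l k ^ x * u l k ^ y * a l k
          = a l k ^ x * u l k ^ y * a l k ^ (1:ℤ) := by rw [zpow_one]
        _ = a l k ^ p' * u l k ^ y := hp'
    · refine ⟨x, y + 1, Or.inl ?_⟩
      calc a l k ^ x * u l k ^ y * u l k
          = a l k ^ x * (u l k ^ y * u l k) := by rw [mul_assoc]
        _ = a l k ^ x * u l k ^ (y + 1) := by rw [← zpow_add_one]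
    · exact ⟨x, y, Or.inr rfl⟩
    · obtain ⟨p', hp'⟩ := form_mul_a l k hl x y ((1:ℤ) * n₂ l)
      refine ⟨p', y, Or.inr ?_⟩
      calc a l k ^ x * u l k ^ y * v l k * a l k
          = a l k ^ x * u l k ^ y * (v l k * a l k ^ (1:ℤ)) := by rw [zpow_one, mul_assoc]
        _ = a l k ^ x * u l k ^ y * a l k ^ ((1:ℤ) * n₂ l) * v l k := by
              rw [v_push_a, ← mul_assoc]
        _ = a l k ^ p' * u l k ^ y * v l k := by rw [hp']
    · refine ⟨x, y - 1, Or.inr ?_⟩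
      calc a l k ^ x * u l k ^ y * v l k * u l k
          = a l k ^ x * u l k ^ y * (v l k * u l k ^ (1:ℤ)) := by rw [zpow_one, mul_assoc]
        _ = a l k ^ x * (u l k ^ y * u l k ^ (-1:ℤ)) * v l k := by
              rw [v_push_u, ← mul_assoc, ← mul_assoc, mul_assoc (a l k ^ x)]
        _ = a l k ^ x * u l k ^ (y - 1) * v l k := by
              rw [← zpow_add, ← sub_eq_add_neg]
    · refine ⟨x, y, Or.inl ?_⟩
      calc a l k ^ x * u l k ^ y * v l k * v l k
          = a l k ^ x * u l k ^ y * (v l k * v l k) := by rw [mul_assoc]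
        _ = a l k ^ x * u l k ^ y := by rw [v_sq, mul_one]
  | mul_inv_cancel g hg w hw ih =>
    obtain ⟨j, rfl⟩ := hw
    obtain ⟨x, y, hg' | hg'⟩ := ih <;> subst hg' <;> fin_cases j
    · obtain ⟨p', hp'⟩ := form_mul_a l k hl x y (-1)
      refine ⟨p', y, Or.inl ?_⟩
      calc a l k ^ x * u l k ^ y * (a l k)⁻¹
          = a l k ^ x * u l k ^ y * a l k ^ (-1:ℤ) := by rw [zpow_neg_one]
        _ = a l k ^ p' * u l k ^ y := hp'
    · refine ⟨x, y - 1, Or.inl ?_⟩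
      calc a l k ^ x * u l k ^ y * (u l k)⁻¹
          = a l k ^ x * (u l k ^ y * u l k ^ (-1:ℤ)) := by rw [zpow_neg_one, mul_assoc]
        _ = a l k ^ x * u l k ^ (y - 1) := by rw [← zpow_add, ← sub_eq_add_neg]
    · refine ⟨x, y, Or.inr ?_⟩
      show a l k ^ x * u l k ^ y * (v l k)⁻¹ = a l k ^ x * u l k ^ y * v l k
      rw [v_inv]
    · obtain ⟨p', hp'⟩ := form_mul_a l k hl x y ((-1:ℤ) * n₂ l)
      refine ⟨p', y, Or.inr ?_⟩
      calc a l k ^ x * u l k ^ y * v l k * (a l k)⁻¹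
          = a l k ^ x * u l k ^ y * (v l k * a l k ^ (-1:ℤ)) := by
              rw [zpow_neg_one, mul_assoc]
        _ = a l k ^ x * u l k ^ y * a l k ^ ((-1:ℤ) * n₂ l) * v l k := by
              rw [v_push_a, ← mul_assoc]
        _ = a l k ^ p' * u l k ^ y * v l k := by rw [hp']
    · refine ⟨x, y + 1, Or.inr ?_⟩
      calc a l k ^ x * u l k ^ y * v l k * (u l k)⁻¹
          = a l k ^ x * u l k ^ y * (v l k * u l k ^ (-1:ℤ)) := by
              rw [zpow_neg_one, mul_assoc]
        _ = a l k ^ x * (u l k ^ y * u l k ^ (-(-1):ℤ)) * v l k := by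
              rw [v_push_u, ← mul_assoc, ← mul_assoc, mul_assoc (a l k ^ x)]
        _ = a l k ^ x * u l k ^ (y + 1) * v l k := by rw [← zpow_add, neg_neg]
    · refine ⟨x, y, Or.inl ?_⟩
      calc a l k ^ x * u l k ^ y * v l k * (v l k)⁻¹
          = a l k ^ x * u l k ^ y * (v l k * v l k) := by rw [v_inv, mul_assoc]
        _ = a l k ^ x * u l k ^ y := by rw [v_sq, mul_one]


/-! ### ZMod facts -/

lemma n1_zmod_sq (hl : 3 ≤ l) :
    ((n₁ l : ℕ) : ZMod (2^l)) * ((n₁ l : ℕ) : ZMod (2^l)) = 1 := by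
  have h := n1_sq l hl
  have h2 : (((n₁ l : ℤ) * n₁ l - 1 : ℤ) : ZMod (2^l)) = 0 := by
    rw [ZMod.intCast_zmod_eq_zero_iff_dvd]
    exact_mod_cast h
  push_cast at h2
  linear_combination h2

lemma n2_zmod_sq (hl : 3 ≤ l) :
    ((n₂ l : ℕ) : ZMod (2^l)) * ((n₂ l : ℕ) : ZMod (2^l)) = 1 := by
  have h := n2_sq l hl
  have h2 : (((n₂ l : ℤ) * n₂ l - 1 : ℤ) : ZMod (2^l)) = 0 := by
    rw [ZMod.intCast_zmod_eq_zero_iff_dvd]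
    exact_mod_cast h
  push_cast at h2
  linear_combination h2

/-! ### The permutation representation, faithful on `⟨a⟩` -/

def mulPerm {N : ℕ} (c : ZMod N) (h : c * c = 1) : Equiv.Perm (ZMod N) where
  toFun x := c * x
  invFun x := c * x
  left_inv x := by change c * (c * x) = x; rw [← mul_assoc, h, one_mul]
  right_inv x := by change c * (c * x) = x; rw [← mul_assoc, h, one_mul]

@[simp] lemma mulPerm_apply {N : ℕ} (c : ZMod N) (h : c * c = 1) (x : ZMod N) :
    mulPerm c h x = c * x := rfl

lemma mulPerm_inv {N : ℕ} (c : ZMod N) (h : c * c = 1) : (mulPerm c h)⁻¹ = mulPerm c h :=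
  Equiv.ext fun _ => rfl

lemma mulPerm_sq {N : ℕ} (c : ZMod N) (h : c * c = 1) : mulPerm c h * mulPerm c h = 1 :=
  Equiv.ext fun x => by
    simp only [Equiv.Perm.mul_apply, mulPerm_apply, ← mul_assoc, h, one_mul,
      Equiv.Perm.one_apply]

variable {l k} in
def fP (hl : 3 ≤ l) : Fin 3 → Equiv.Perm (ZMod (2^l)) :=
  ![Equiv.addLeft 1, mulPerm _ (n1_zmod_sq l hl), mulPerm _ (n2_zmod_sq l hl)]

lemma fP_rels (hl : 3 ≤ l) (hk : 2 ∣ k) :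
    ∀ r ∈ rels l k, FreeGroup.lift (fP (l := l) hl) r = 1 := by
  intro r hr
  have hz1 := n1_zmod_sq l hl
  have hz2 := n2_zmod_sq l hl
  simp only [rels, Set.mem_insert_iff, Set.mem_singleton_iff] at hr
  rcases hr with rfl | rfl | rfl | rfl | rfl | rfl
  · simp only [map_pow, FreeGroup.lift_apply_of, fP, Matrix.cons_val_zero, Equiv.nsmul_addLeft]
    rw [nsmul_eq_mul, mul_one]
    rw [ZMod.natCast_self, Equiv.addLeft_zero]
  · obtain ⟨k', rfl⟩ := hk
    simp only [map_pow, FreeGroup.lift_apply_of, fP, Matrix.cons_val_one, Matrix.head_cons,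
      Matrix.cons_val_zero]
    rw [pow_mul, sq, mulPerm_sq, one_pow]
  · simp only [map_pow, FreeGroup.lift_apply_of, fP, Matrix.cons_val_two, Matrix.tail_cons,
      Matrix.head_cons]
    rw [sq, mulPerm_sq]
  · simp only [map_mul, map_inv, map_pow, FreeGroup.lift_apply_of, fP, Matrix.cons_val_zero,
      Matrix.cons_val_one, Matrix.head_cons, mulPerm_inv, Equiv.nsmul_addLeft,
      Equiv.neg_addLeft]
    refine Equiv.ext fun x => ?_
    simp only [Equiv.Perm.mul_apply, mulPerm_apply, Equiv.coe_addLeft, nsmul_eq_mul, mul_one,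
      Equiv.Perm.one_apply]
    linear_combination (x - ((n₁ l : ℕ) : ZMod (2^l))) * hz1
  · simp only [map_mul, map_inv, map_pow, FreeGroup.lift_apply_of, fP, Matrix.cons_val_zero,
      Matrix.cons_val_two, Matrix.tail_cons, Matrix.head_cons, Equiv.nsmul_addLeft,
      Equiv.neg_addLeft]
    refine Equiv.ext fun x => ?_
    simp only [Equiv.Perm.mul_apply, mulPerm_apply, Equiv.coe_addLeft, nsmul_eq_mul, mul_one,
      Equiv.Perm.one_apply]
    linear_combination (x - ((n₂ l : ℕ) : ZMod (2^l))) * hz2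
  · simp only [map_mul, FreeGroup.lift_apply_of, fP, Matrix.cons_val_one, Matrix.cons_val_two,
      Matrix.tail_cons, Matrix.head_cons, Matrix.cons_val_zero]
    refine Equiv.ext fun x => ?_
    simp only [Equiv.Perm.mul_apply, mulPerm_apply, Equiv.Perm.one_apply]
    linear_combination (((n₁ l : ℕ) : ZMod (2^l)) * ((n₁ l : ℕ) : ZMod (2^l)) * x) * hz2 +
      x * hz1

variable {l k} in
def permP (hl : 3 ≤ l) (hk : 2 ∣ k) : G l k →* Equiv.Perm (ZMod (2^l)) :=
  PresentedGroup.toGroup (fP_rels l k hl hk)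

lemma permP_a (hl : 3 ≤ l) (hk : 2 ∣ k) (m : ℤ) :
    permP hl hk (a l k ^ m) = Equiv.addLeft ((m : ZMod (2^l))) := by
  rw [map_zpow]
  have : permP hl hk (a l k) = Equiv.addLeft (1 : ZMod (2^l)) := by
    show permP hl hk (PresentedGroup.of 0) = _
    rw [permP, PresentedGroup.toGroup.of]
    rfl
  rw [this, Equiv.zsmul_addLeft, zsmul_eq_mul, mul_one]

lemma a_zpow_eq_iff (hl : 3 ≤ l) (hk : 2 ∣ k) {m n : ℤ} :
    a l k ^ m = a l k ^ n ↔ ((2:ℤ)^l) ∣ m - n := by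
  constructor
  · intro h
    have h2 := congrArg (permP hl hk) h
    rw [permP_a l k hl hk, permP_a l k hl hk] at h2
    have h3 : ((m : ZMod (2^l))) = n := by
      have := congrArg (fun e => e.toFun 0) h2
      simpa using this
    rw [ZMod.intCast_eq_intCast_iff] at h3
    have h4 : ((2:ℤ)^l) ∣ n - m := by exact_mod_cast Int.ModEq.dvd h3
    exact dvd_sub_comm.mp h4
  · exact apow_congr l k


/-! ### The dihedral representation, faithful on `⟨u⟩` mod `⟨a⟩` -/

open DihedralGroup in
lemma fD_rels : ∀ rel ∈ rels l k,
    FreeGroup.lift (![1, r 1, sr 0] : Fin 3 → DihedralGroup k) rel = 1 := by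
  intro rel hr
  simp only [rels, Set.mem_insert_iff, Set.mem_singleton_iff] at hr
  rcases hr with rfl | rfl | rfl | rfl | rfl | rfl
  · simp
  · simp only [map_pow, FreeGroup.lift_apply_of, Matrix.cons_val_one, Matrix.head_cons,
      Matrix.cons_val_zero]
    rw [r_one_pow, ZMod.natCast_self, ← one_def]
  · simp only [map_pow, FreeGroup.lift_apply_of, Matrix.cons_val_two, Matrix.tail_cons,
      Matrix.head_cons]
    rw [sq, sr_mul_self]
  · simp
  · simp only [map_mul, map_inv, map_pow, FreeGroup.lift_apply_of, Matrix.cons_val_zero,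
      Matrix.cons_val_two, Matrix.tail_cons, Matrix.head_cons, one_pow, inv_one, mul_one]
    rw [sr_mul_self]
  · simp only [map_mul, FreeGroup.lift_apply_of, Matrix.cons_val_one, Matrix.cons_val_two,
      Matrix.tail_cons, Matrix.head_cons, Matrix.cons_val_zero]
    rw [sr_mul_r, sr_mul_sr, r_mul_r]
    norm_num

variable {l k} in
def permD : G l k →* DihedralGroup k :=
  PresentedGroup.toGroup (fD_rels l k)

open DihedralGroup in
lemma r_inv' (j : ZMod k) : (r j)⁻¹ = r (-j) := by
  symm
  rw [eq_inv_iff_mul_eq_one, r_mul_r, neg_add_cancel, ← one_def]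

open DihedralGroup in
lemma r_one_zpow (m : ℤ) : (r 1 : DihedralGroup k) ^ m = r (m : ZMod k) := by
  cases m with
  | ofNat n =>
    rw [Int.ofNat_eq_coe, zpow_natCast, r_one_pow]
    norm_num
  | negSucc n =>
    rw [zpow_negSucc, r_one_pow, r_inv']
    congr 1
    push_cast
    ring

lemma permD_u (m : ℤ) : permD (u l k ^ m) = DihedralGroup.r (m : ZMod k) := by
  rw [map_zpow]
  have : permD (u l k) = DihedralGroup.r 1 := by
    show permD (PresentedGroup.of 1) = _
    rw [permD, PresentedGroup.toGroup.of]
    rfl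
  rw [this, r_one_zpow]

lemma permD_a (m : ℤ) : permD (a l k ^ m) = 1 := by
  rw [map_zpow]
  have : permD (a l k) = 1 := by
    show permD (PresentedGroup.of 0) = _
    rw [permD, PresentedGroup.toGroup.of]
    rfl
  rw [this, one_zpow]

lemma u_eq_a_dvd {m c : ℤ} (h : u l k ^ m = a l k ^ c) : (k:ℤ) ∣ m := by
  have h2 := congrArg (permD (l := l) (k := k)) h
  rw [permD_u, permD_a] at h2
  have h3 : (m : ZMod k) = ((0:ℤ) : ZMod k) := by
    rw [DihedralGroup.one_def] at h2
    injection h2 with h2'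
    simpa using h2'
  rw [ZMod.intCast_eq_intCast_iff] at h3
  simpa using (Int.ModEq.dvd h3)

/-! ### Sign homomorphisms to `ℤˣ` -/

lemma n1_odd (hl : 3 ≤ l) : Odd (n₁ l) := by
  obtain ⟨c, rfl⟩ : ∃ c, l = c + 3 := ⟨l - 3, by omega⟩
  refine ⟨2^(c+1), ?_⟩
  show 2^(c+3-1) + 1 = _
  have : c + 3 - 1 = c + 2 := by omega
  rw [this]; ring

lemma n2_odd (hl : 3 ≤ l) : Odd (n₂ l) := by
  obtain ⟨c, rfl⟩ : ∃ c, l = c + 3 := ⟨l - 3, by omega⟩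
  refine ⟨2^(c+1) - 1, ?_⟩
  show 2^(c+3-1) - 1 = _
  have h1 : c + 3 - 1 = c + 2 := by omega
  have h2 : (1:ℕ) ≤ 2^(c+1) := Nat.one_le_two_pow
  rw [h1]
  have : (2:ℕ)^(c+2) = 2 * 2^(c+1) := by ring
  omega

lemma even_two_pow (hl : 3 ≤ l) : Even (2^l) := by
  obtain ⟨c, rfl⟩ : ∃ c, l = c + 3 := ⟨l - 3, by omega⟩
  exact ⟨2^(c+2), by ring⟩

lemma fsgn_rels_even (hl : 3 ≤ l) (hk : 2 ∣ k) :
    ∀ r ∈ rels l k, FreeGroup.lift (![(-1 : ℤˣ), 1, 1]) r = 1 := by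
  intro rel hr
  simp only [rels, Set.mem_insert_iff, Set.mem_singleton_iff] at hr
  rcases hr with rfl | rfl | rfl | rfl | rfl | rfl <;>
    simp only [map_mul, map_pow, map_inv, FreeGroup.lift_apply_of, Matrix.cons_val_zero,
      Matrix.cons_val_one, Matrix.cons_val_two, Matrix.tail_cons, Matrix.head_cons,
      one_pow, inv_one, mul_one, one_mul]
  · exact Even.neg_one_pow (even_two_pow l hl)
  · rw [(n1_odd l hl).neg_one_pow]
    norm_num
  · rw [(n2_odd l hl).neg_one_pow]
    norm_num


lemma fsgn_rels_v : ∀ rel ∈ rels l k, FreeGroup.lift (![(1 : ℤˣ), 1, -1]) rel = 1 := by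
  intro rel hr
  simp only [rels, Set.mem_insert_iff, Set.mem_singleton_iff] at hr
  rcases hr with rfl | rfl | rfl | rfl | rfl | rfl <;>
    simp [map_mul, map_pow, map_inv, FreeGroup.lift_apply_of]

lemma fsgn_rels_odd (hl : 3 ≤ l) (hk : 2 ∣ k) :
    ∀ rel ∈ rels l k, FreeGroup.lift (![(-1 : ℤˣ), -1, 1]) rel = 1 := by
  intro rel hr
  simp only [rels, Set.mem_insert_iff, Set.mem_singleton_iff] at hr
  rcases hr with rfl | rfl | rfl | rfl | rfl | rfl <;>
    simp only [map_mul, map_pow, map_inv, FreeGroup.lift_apply_of, Matrix.cons_val_zero,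
      Matrix.cons_val_one, Matrix.cons_val_two, Matrix.tail_cons, Matrix.head_cons,
      one_pow, inv_one, mul_one, one_mul]
  · exact Even.neg_one_pow (even_two_pow l hl)
  · obtain ⟨k', rfl⟩ := hk
    exact Even.neg_one_pow ⟨k', two_mul k'⟩
  · rw [(n1_odd l hl).neg_one_pow]
    norm_num
  · rw [(n2_odd l hl).neg_one_pow]
    norm_num
  · norm_num

variable {l k} in
def sgnE (hl : 3 ≤ l) (hk : 2 ∣ k) : G l k →* ℤˣ :=
  PresentedGroup.toGroup (fsgn_rels_even l k hl hk)

variable {l k} in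
def sgnV : G l k →* ℤˣ :=
  PresentedGroup.toGroup (fsgn_rels_v l k)

variable {l k} in
def sgnO (hl : 3 ≤ l) (hk : 2 ∣ k) : G l k →* ℤˣ :=
  PresentedGroup.toGroup (fsgn_rels_odd l k hl hk)

section sgnvals
variable (hl : 3 ≤ l) (hk : 2 ∣ k)

lemma sgnE_a : sgnE hl hk (a l k) = -1 := by
  show sgnE hl hk (PresentedGroup.of 0) = -1
  rw [sgnE, PresentedGroup.toGroup.of]; rfl

lemma sgnE_u : sgnE hl hk (u l k) = 1 := by
  show sgnE hl hk (PresentedGroup.of 1) = 1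
  rw [sgnE, PresentedGroup.toGroup.of]; rfl

lemma sgnE_v : sgnE hl hk (v l k) = 1 := by
  show sgnE hl hk (PresentedGroup.of 2) = 1
  rw [sgnE, PresentedGroup.toGroup.of]; rfl

lemma sgnV_a : sgnV (a l k) = 1 := by
  show sgnV (PresentedGroup.of 0) = 1
  rw [sgnV, PresentedGroup.toGroup.of]; rfl

lemma sgnV_u : sgnV (u l k) = 1 := by
  show sgnV (PresentedGroup.of 1) = 1
  rw [sgnV, PresentedGroup.toGroup.of]; rfl

lemma sgnV_v : sgnV (v l k) = -1 := by
  show sgnV (PresentedGroup.of 2) = -1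
  rw [sgnV, PresentedGroup.toGroup.of]; rfl

lemma sgnO_a : sgnO hl hk (a l k) = -1 := by
  show sgnO hl hk (PresentedGroup.of 0) = -1
  rw [sgnO, PresentedGroup.toGroup.of]; rfl

lemma sgnO_u : sgnO hl hk (u l k) = -1 := by
  show sgnO hl hk (PresentedGroup.of 1) = -1
  rw [sgnO, PresentedGroup.toGroup.of]; rfl

lemma sgnO_v : sgnO hl hk (v l k) = 1 := by
  show sgnO hl hk (PresentedGroup.of 2) = 1
  rw [sgnO, PresentedGroup.toGroup.of]; rfl

end sgnvals

lemma neg_one_zpow_even {x : ℤ} (h : Even x) : (-1 : ℤˣ) ^ x = 1 := by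
  obtain ⟨c, rfl⟩ := h
  rw [zpow_add]
  exact Int.units_mul_self _

lemma neg_one_zpow_odd {x : ℤ} (h : Odd x) : (-1 : ℤˣ) ^ x = -1 := by
  obtain ⟨c, rfl⟩ := h
  rw [zpow_add, zpow_one, zpow_mul]
  norm_num


/-! ### Product computations -/

lemma mul_form_even (hl : 3 ≤ l) {y : ℤ} (hy : Even y) (x s i : ℤ) :
    (a l k ^ x * u l k ^ y) * (a l k ^ s * u l k ^ i) =
      a l k ^ (x + s) * u l k ^ (y + i) := by
  rw [mul_assoc, ← mul_assoc (u l k ^ y), upush_even l k hl hy s, mul_assoc, ← zpow_add,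
    ← mul_assoc, ← zpow_add]

lemma mul_form_odd (hl : 3 ≤ l) {y : ℤ} (hy : Odd y) (x s i : ℤ) :
    (a l k ^ x * u l k ^ y) * (a l k ^ s * u l k ^ i) =
      a l k ^ (x + s * n₁ l) * u l k ^ (y + i) := by
  rw [mul_assoc, ← mul_assoc (u l k ^ y), upush_odd l k hl hy s, mul_assoc, ← zpow_add,
    ← mul_assoc, ← zpow_add]

lemma v_mul_form (s i : ℤ) :
    v l k * (a l k ^ s * u l k ^ i) = a l k ^ (s * n₂ l) * u l k ^ (-i) * v l k := by
  rw [← mul_assoc, v_push_a, mul_assoc, v_push_u, ← mul_assoc]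

lemma mul_formv_even (hl : 3 ≤ l) {y : ℤ} (hy : Even y) (x s i : ℤ) :
    (a l k ^ x * u l k ^ y * v l k) * (a l k ^ s * u l k ^ i) =
      a l k ^ (x + s * n₂ l) * u l k ^ (y + -i) * v l k := by
  rw [mul_assoc (a l k ^ x * u l k ^ y), v_mul_form, ← mul_assoc,
    mul_form_even l k hl hy]

lemma mul_formv_odd (hl : 3 ≤ l) {y : ℤ} (hy : Odd y) (x s i : ℤ) :
    (a l k ^ x * u l k ^ y * v l k) * (a l k ^ s * u l k ^ i) =
      a l k ^ (x + s * n₂ l * n₁ l) * u l k ^ (y + -i) * v l k := by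
  rw [mul_assoc (a l k ^ x * u l k ^ y), v_mul_form, ← mul_assoc,
    mul_form_odd l k hl hy]

lemma mul_vform (hl : 3 ≤ l) {i : ℤ} (hi : Odd i) (s x y : ℤ) :
    (a l k ^ s * u l k ^ i) * (a l k ^ x * u l k ^ y * v l k) =
      a l k ^ (s + x * n₁ l) * u l k ^ (i + y) * v l k := by
  rw [← mul_assoc, mul_form_odd l k hl hi]

/-! ### Cancellation -/

lemma cancel_forms {P Q P' Q' : ℤ}
    (h : a l k ^ P * u l k ^ Q = a l k ^ P' * u l k ^ Q') :
    a l k ^ (P - P') = u l k ^ (Q' - Q) := by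
  calc a l k ^ (P - P')
      = (a l k ^ P')⁻¹ * (a l k ^ P * u l k ^ Q) * (u l k ^ Q)⁻¹ := by group
    _ = (a l k ^ P')⁻¹ * (a l k ^ P' * u l k ^ Q') * (u l k ^ Q)⁻¹ := by rw [h]
    _ = u l k ^ (Q' - Q) := by group

lemma cancel_a (hl : 3 ≤ l) (hk : 2 ∣ k) {P Q P' : ℤ}
    (h : a l k ^ P * u l k ^ Q = a l k ^ P' * u l k ^ Q) :
    ((2:ℤ)^l) ∣ P - P' := by
  have h2 := cancel_forms l k h
  rw [sub_self, zpow_zero] at h2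
  have h3 := (a_zpow_eq_iff l k hl hk (m := P - P') (n := 0)).mp (by rw [zpow_zero]; exact h2)
  simpa using h3

lemma even_of_dvd_mul (hl : 3 ≤ l) {x : ℤ} (h : ((2:ℤ)^l) ∣ x * 2^(l-1)) : Even x := by
  obtain ⟨c, rfl⟩ : ∃ c, l = c + 3 := ⟨l - 3, by omega⟩
  rw [show c + 3 - 1 = c + 2 by omega] at h
  obtain ⟨d, hd⟩ := h
  have h2 : x * 2^(c+2) = (2*d) * 2^(c+2) := by rw [hd]; ring
  have h3 := mul_right_cancel₀ (b := (2:ℤ)^(c+2)) (by positivity) h2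
  exact ⟨d, by omega⟩

/-! ### Membership in the closures -/

lemma apow_mem_closE {x : ℤ} (hx : Even x) :
    a l k ^ x ∈ Subgroup.closure {a l k ^ 2, u l k} := by
  obtain ⟨c, rfl⟩ := hx
  have : a l k ^ (c + c) = (a l k ^ 2) ^ c := by
    rw [← zpow_natCast (a l k) 2, ← zpow_mul]
    congr 1
    ring
  rw [this]
  exact zpow_mem (Subgroup.subset_closure (Set.mem_insert _ _)) c

lemma mem_closE {x y : ℤ} (hx : Even x) :
    a l k ^ x * u l k ^ y ∈ Subgroup.closure {a l k ^ 2, u l k} := by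
  exact mul_mem (apow_mem_closE l k hx)
    (zpow_mem (Subgroup.subset_closure (by right; rfl)) y)

lemma apow_mem_closO {x : ℤ} (hx : Even x) :
    a l k ^ x ∈ Subgroup.closure {a l k ^ 2, a l k * u l k} := by
  obtain ⟨c, rfl⟩ := hx
  have : a l k ^ (c + c) = (a l k ^ 2) ^ c := by
    rw [← zpow_natCast (a l k) 2, ← zpow_mul]
    congr 1
    ring
  rw [this]
  exact zpow_mem (Subgroup.subset_closure (Set.mem_insert _ _)) c

lemma au_sq (hl : 3 ≤ l) :
    (a l k * u l k) * (a l k * u l k) = a l k ^ ((n₁ l : ℤ) + 1) * u l k ^ (2:ℤ) := by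
  have h1 : u l k * a l k = a l k ^ ((1:ℤ) * n₁ l) * u l k := by
    have := u_push l k 1
    rw [zpow_one] at this
    exact this
  calc (a l k * u l k) * (a l k * u l k)
      = a l k * (u l k * a l k) * u l k := by group
    _ = a l k * (a l k ^ ((1:ℤ) * n₁ l) * u l k) * u l k := by rw [h1]
    _ = a l k ^ ((n₁ l : ℤ) + 1) * u l k ^ (2:ℤ) := by rw [zpow_two]; group

lemma usq_mem_closO (hl : 3 ≤ l) :
    u l k ^ (2:ℤ) ∈ Subgroup.closure {a l k ^ 2, a l k * u l k} := by
  have h := au_sq l k hl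
  have h2 : u l k ^ (2:ℤ) = a l k ^ (-((n₁ l : ℤ) + 1)) * ((a l k * u l k) * (a l k * u l k)) := by
    rw [h]; group
  rw [h2]
  refine mul_mem (apow_mem_closO l k ?_) (mul_mem (Subgroup.subset_closure (by right; rfl))
    (Subgroup.subset_closure (by right; rfl)))
  have : ((n₁ l : ℕ) : ℤ) = 2^(l-1) + 1 := n1_cast l
  obtain ⟨c, rfl⟩ : ∃ c, l = c + 3 := ⟨l - 3, by omega⟩
  rw [show c + 3 - 1 = c + 2 by omega] at this
  refine ⟨-(2^(c+1) + 1), ?_⟩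
  rw [this]
  have : (2:ℤ)^(c+2) = 2^(c+1) + 2^(c+1) := by ring
  omega

lemma mem_closO (hl : 3 ≤ l) {x y : ℤ} (hxy : Even (x - y)) :
    a l k ^ x * u l k ^ y ∈ Subgroup.closure {a l k ^ 2, a l k * u l k} := by
  rcases Int.even_or_odd y with hy | hy
  · have hx : Even x := by
      obtain ⟨c, hc⟩ := hxy; obtain ⟨d, hd⟩ := hy; exact ⟨c + d, by omega⟩
    refine mul_mem (apow_mem_closO l k hx) ?_
    obtain ⟨d, hd⟩ := hy
    have : u l k ^ y = (u l k ^ (2:ℤ)) ^ d := by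
      rw [← zpow_mul]; congr 1; omega
    rw [this]
    exact zpow_mem (usq_mem_closO l k hl) d
  · have hx : Odd x := by
      obtain ⟨c, hc⟩ := hxy; obtain ⟨d, hd⟩ := hy; exact ⟨c + d, by omega⟩
    have key : a l k ^ x * u l k ^ y =
        a l k ^ (x - 1) * ((a l k * u l k) * u l k ^ (y - 1)) := by group
    rw [key]
    refine mul_mem (apow_mem_closO l k ?_) (mul_mem (Subgroup.subset_closure (by right; rfl)) ?_)
    · obtain ⟨c, hc⟩ := hx; exact ⟨c, by omega⟩
    · obtain ⟨d, hd⟩ := hy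
      have : u l k ^ (y - 1) = (u l k ^ (2:ℤ)) ^ d := by
        rw [← zpow_mul]; congr 1; omega
      rw [this]
      exact zpow_mem (usq_mem_closO l k hl) d


/-! ### Generator commutation -/

lemma pow2_zpow : a l k ^ (2:ℕ) = a l k ^ (2:ℤ) := by rw [pow_two, zpow_two]

lemma dvd_2n1_sub_2 (hl : 3 ≤ l) : ((2:ℤ)^l) ∣ (2 * n₁ l - 2) := by
  refine ⟨1, ?_⟩
  rw [n1_cast l]
  obtain ⟨c, rfl⟩ : ∃ c, l = c + 3 := ⟨l - 3, by omega⟩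
  rw [show c + 3 - 1 = c + 2 by omega]
  ring

lemma comm_a2_u (hl : 3 ≤ l) : a l k ^ 2 * u l k = u l k * a l k ^ 2 := by
  have h1 : u l k * a l k ^ (2:ℤ) = a l k ^ ((2:ℤ) * n₁ l) * u l k := u_push l k 2
  have h2 : a l k ^ ((2:ℤ) * n₁ l) = a l k ^ (2:ℤ) :=
    apow_congr l k (dvd_2n1_sub_2 l hl)
  rw [pow2_zpow, h1, h2]

lemma comm_a2_au (hl : 3 ≤ l) :
    a l k ^ 2 * (a l k * u l k) = (a l k * u l k) * a l k ^ 2 := by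
  have h1 : u l k * a l k ^ (2:ℤ) = a l k ^ ((2:ℤ) * n₁ l) * u l k := u_push l k 2
  have hr : (a l k * u l k) * a l k ^ (2:ℤ) = a l k ^ (1 + (2:ℤ) * n₁ l) * u l k := by
    calc (a l k * u l k) * a l k ^ (2:ℤ) = a l k * (u l k * a l k ^ (2:ℤ)) := by group
      _ = a l k * (a l k ^ ((2:ℤ) * n₁ l) * u l k) := by rw [h1]
      _ = a l k ^ (1 + (2:ℤ) * n₁ l) * u l k := by group
  have hlhs : a l k ^ (2:ℤ) * (a l k * u l k) = a l k ^ (3:ℤ) * u l k := by group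
  rw [pow2_zpow, hlhs, hr]
  congr 1
  refine apow_congr l k ?_
  have := dvd_2n1_sub_2 l hl
  have h3 : (3:ℤ) - (1 + 2 * n₁ l) = -(2 * n₁ l - 2) := by ring
  rw [h3]
  exact Dvd.dvd.neg_right this

/-! ### Commutativity of a closure of pairwise commuting elements -/

lemma closure_comm {H : Type*} [Group H] (S : Set H)
    (hS : ∀ x ∈ S, ∀ y ∈ S, x * y = y * x) :
    IsMulCommutative (Subgroup.closure S) := by
  have key : ∀ g ∈ Subgroup.closure S, ∀ y ∈ S, g * y = y * g := by
    intro g hg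
    induction hg using Subgroup.closure_induction with
    | mem x hx => exact fun y hy => hS x hx y hy
    | one => exact fun y hy => by rw [one_mul, mul_one]
    | mul x z hx hz ihx ihz =>
      exact fun y hy => by rw [mul_assoc, ihz y hy, ← mul_assoc, ihx y hy, mul_assoc]
    | inv x hx ih =>
      exact fun y hy => (Commute.inv_left (ih y hy : Commute x y)).eq
  constructor; constructor
  rintro ⟨g, hg⟩ ⟨h, hh⟩
  apply Subtype.ext
  show g * h = h * g
  induction hh using Subgroup.closure_induction with
  | mem y hy => exact key g hg y hy
  | one => rw [one_mul, mul_one]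
  | mul y z hy hz ihy ihz => rw [← mul_assoc, ihy, mul_assoc, ihz, ← mul_assoc]
  | inv y hy ih => exact (Commute.inv_right (ih : Commute g y)).eq


/-! ### Centralizer computations -/

lemma not_dvd_2i {i : ℤ} (hi : Odd i) (hk4 : 4 ∣ k) (h : (k:ℤ) ∣ -(2*i)) : False := by
  have h4 : (4:ℤ) ∣ k := by exact_mod_cast hk4
  have h6 := h4.trans h
  obtain ⟨w, rfl⟩ := hi
  omega

lemma cent_even (hl : 3 ≤ l) (hk4 : 4 ∣ k) (s i : ℤ) (hs : Even s) (hi : Odd i) :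
    Subgroup.centralizer {a l k ^ s * u l k ^ i} =
      Subgroup.closure {a l k ^ 2, u l k} := by
  have hk2 : 2 ∣ k := dvd_trans (by norm_num) hk4
  apply le_antisymm
  · intro g hg
    have hc : (a l k ^ s * u l k ^ i) * g = g * (a l k ^ s * u l k ^ i) :=
      Subgroup.mem_centralizer_iff.mp hg _ rfl
    obtain ⟨x, y, hf | hf⟩ := normal_form l k hl g <;> subst hf
    · rcases Int.even_or_odd y with hy | hy
      · rw [mul_form_odd l k hl hi, mul_form_even l k hl hy, add_comm i y] at hc
        have hd := cancel_a l k hl hk2 hc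
        have hd2 : ((2:ℤ)^l) ∣ x * 2^(l-1) := by
          have he : (s + x * n₁ l) - (x + s) = x * 2^(l-1) := by rw [n1_cast l]; ring
          rwa [he] at hd
        exact mem_closE l k (even_of_dvd_mul l hl hd2)
      · rw [mul_form_odd l k hl hi, mul_form_odd l k hl hy, add_comm i y] at hc
        have hd := cancel_a l k hl hk2 hc
        have hd2 : ((2:ℤ)^l) ∣ (x - s) * 2^(l-1) := by
          have he : (s + x * n₁ l) - (x + s * n₁ l) = (x - s) * 2^(l-1) := by
            rw [n1_cast l]; ring
          rwa [he] at hd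
        have hxs : Even (x - s) := even_of_dvd_mul l hl hd2
        have hx : Even x := by
          obtain ⟨c, hc'⟩ := hs; obtain ⟨d, hd'⟩ := hxs; exact ⟨c + d, by omega⟩
        exact mem_closE l k hx
    · exfalso
      rcases Int.even_or_odd y with hy | hy
      · rw [mul_vform l k hl hi, mul_formv_even l k hl hy] at hc
        have hc2 := mul_right_cancel hc
        have h3 := cancel_forms l k hc2
        have hdk := u_eq_a_dvd l k h3.symm
        rw [show (y + -i) - (i + y) = -(2*i) by ring] at hdk
        exact not_dvd_2i k hi hk4 hdk
      · rw [mul_vform l k hl hi, mul_formv_odd l k hl hy] at hc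
        have hc2 := mul_right_cancel hc
        have h3 := cancel_forms l k hc2
        have hdk := u_eq_a_dvd l k h3.symm
        rw [show (y + -i) - (i + y) = -(2*i) by ring] at hdk
        exact not_dvd_2i k hi hk4 hdk
  · rw [Subgroup.closure_le]
    rintro w hw
    simp only [Set.mem_insert_iff, Set.mem_singleton_iff] at hw
    rw [SetLike.mem_coe, Subgroup.mem_centralizer_iff]
    rintro m hm
    rw [Set.mem_singleton_iff] at hm; subst hm
    rcases hw with rfl | rfl
    · have e2 : a l k ^ (2:ℕ) = a l k ^ (2:ℤ) * u l k ^ (0:ℤ) := by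
        rw [pow2_zpow, zpow_zero, mul_one]
      rw [e2, mul_form_odd l k hl hi, mul_form_even l k hl Even.zero]
      rw [apow_congr l k (m := s + 2 * n₁ l) (n := 2 + s) (by
        have := dvd_2n1_sub_2 l hl
        rw [show (s + 2 * n₁ l) - (2 + s) = 2 * n₁ l - 2 by ring]
        exact this)]
      rw [show i + (0:ℤ) = 0 + i by ring]
    · have lhs : (a l k ^ s * u l k ^ i) * u l k = a l k ^ s * u l k ^ (i+1) := by
        rw [mul_assoc, ← zpow_add_one]
      have rhs : u l k * (a l k ^ s * u l k ^ i) = a l k ^ (s * n₁ l) * u l k ^ (1+i) := by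
        rw [← mul_assoc, u_push, mul_assoc, ← zpow_one_add]
      rw [lhs, rhs]
      rw [apow_congr l k (m := s) (n := s * n₁ l) (by
        obtain ⟨e, he⟩ := hs
        refine ⟨-e, ?_⟩
        rw [n1_cast l]
        obtain ⟨c, rfl⟩ : ∃ c, l = c + 3 := ⟨l - 3, by omega⟩
        rw [show c + 3 - 1 = c + 2 by omega]
        subst he
        ring)]
      rw [show i + (1:ℤ) = 1 + i by ring]

lemma cent_odd (hl : 3 ≤ l) (hk4 : 4 ∣ k) (s i : ℤ) (hs : Odd s) (hi : Odd i) :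
    Subgroup.centralizer {a l k ^ s * u l k ^ i} =
      Subgroup.closure {a l k ^ 2, a l k * u l k} := by
  have hk2 : 2 ∣ k := dvd_trans (by norm_num) hk4
  apply le_antisymm
  · intro g hg
    have hc : (a l k ^ s * u l k ^ i) * g = g * (a l k ^ s * u l k ^ i) :=
      Subgroup.mem_centralizer_iff.mp hg _ rfl
    obtain ⟨x, y, hf | hf⟩ := normal_form l k hl g <;> subst hf
    · rcases Int.even_or_odd y with hy | hy
      · rw [mul_form_odd l k hl hi, mul_form_even l k hl hy, add_comm i y] at hc
        have hd := cancel_a l k hl hk2 hc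
        have hd2 : ((2:ℤ)^l) ∣ x * 2^(l-1) := by
          have he : (s + x * n₁ l) - (x + s) = x * 2^(l-1) := by rw [n1_cast l]; ring
          rwa [he] at hd
        have hx : Even x := even_of_dvd_mul l hl hd2
        refine mem_closO l k hl ?_
        obtain ⟨c, hc'⟩ := hx; obtain ⟨d, hd'⟩ := hy; exact ⟨c - d, by omega⟩
      · rw [mul_form_odd l k hl hi, mul_form_odd l k hl hy, add_comm i y] at hc
        have hd := cancel_a l k hl hk2 hc
        have hd2 : ((2:ℤ)^l) ∣ (x - s) * 2^(l-1) := by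
          have he : (s + x * n₁ l) - (x + s * n₁ l) = (x - s) * 2^(l-1) := by
            rw [n1_cast l]; ring
          rwa [he] at hd
        have hxs : Even (x - s) := even_of_dvd_mul l hl hd2
        refine mem_closO l k hl ?_
        obtain ⟨c, hc'⟩ := hxs; obtain ⟨d, hd'⟩ := hs; obtain ⟨e, he'⟩ := hy
        exact ⟨c + d - e, by omega⟩
    · exfalso
      rcases Int.even_or_odd y with hy | hy
      · rw [mul_vform l k hl hi, mul_formv_even l k hl hy] at hc
        have hc2 := mul_right_cancel hc
        have h3 := cancel_forms l k hc2
        have hdk := u_eq_a_dvd l k h3.symm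
        rw [show (y + -i) - (i + y) = -(2*i) by ring] at hdk
        exact not_dvd_2i k hi hk4 hdk
      · rw [mul_vform l k hl hi, mul_formv_odd l k hl hy] at hc
        have hc2 := mul_right_cancel hc
        have h3 := cancel_forms l k hc2
        have hdk := u_eq_a_dvd l k h3.symm
        rw [show (y + -i) - (i + y) = -(2*i) by ring] at hdk
        exact not_dvd_2i k hi hk4 hdk
  · rw [Subgroup.closure_le]
    rintro w hw
    simp only [Set.mem_insert_iff, Set.mem_singleton_iff] at hw
    rw [SetLike.mem_coe, Subgroup.mem_centralizer_iff]
    rintro m hm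
    rw [Set.mem_singleton_iff] at hm; subst hm
    rcases hw with rfl | rfl
    · have e2 : a l k ^ (2:ℕ) = a l k ^ (2:ℤ) * u l k ^ (0:ℤ) := by
        rw [pow2_zpow, zpow_zero, mul_one]
      rw [e2, mul_form_odd l k hl hi, mul_form_even l k hl Even.zero]
      rw [apow_congr l k (m := s + 2 * n₁ l) (n := 2 + s) (by
        have := dvd_2n1_sub_2 l hl
        rw [show (s + 2 * n₁ l) - (2 + s) = 2 * n₁ l - 2 by ring]
        exact this)]
      rw [show i + (0:ℤ) = 0 + i by ring]
    · have e4 : a l k * u l k = a l k ^ (1:ℤ) * u l k ^ (1:ℤ) := by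
        rw [zpow_one, zpow_one]
      rw [e4, mul_form_odd l k hl hi, mul_form_odd l k hl odd_one]
      rw [apow_congr l k (m := s + 1 * n₁ l) (n := 1 + s * n₁ l) (by
        obtain ⟨e, he⟩ := hs
        refine ⟨-e, ?_⟩
        rw [n1_cast l]
        obtain ⟨c, rfl⟩ : ∃ c, l = c + 3 := ⟨l - 3, by omega⟩
        rw [show c + 3 - 1 = c + 2 by omega]
        subst he
        ring)]
      rw [show i + (1:ℤ) = 1 + i by ring]


/-! ### Kernel descriptions and index -/

section kers
variable (hl : 3 ≤ l) (hk2 : 2 ∣ k)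

lemma sgnE_form1 (x y : ℤ) : sgnE hl hk2 (a l k ^ x * u l k ^ y) = (-1)^x := by
  rw [map_mul, map_zpow, map_zpow, sgnE_a l k hl hk2, sgnE_u l k hl hk2, one_zpow, mul_one]

lemma sgnV_form2 (x y : ℤ) : sgnV (a l k ^ x * u l k ^ y * v l k) = -1 := by
  rw [map_mul, map_mul, map_zpow, map_zpow, sgnV_a l k, sgnV_u l k, sgnV_v l k,
    one_zpow, one_zpow, one_mul, one_mul]

lemma sgnO_form1 (x y : ℤ) :
    sgnO hl hk2 (a l k ^ x * u l k ^ y) = (-1)^x * (-1)^y := by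
  rw [map_mul, map_zpow, map_zpow, sgnO_a l k hl hk2, sgnO_u l k hl hk2]

lemma closE_eq_ker :
    Subgroup.closure {a l k ^ 2, u l k} = ((sgnE hl hk2).prod sgnV).ker := by
  apply le_antisymm
  · rw [Subgroup.closure_le]
    rintro w hw
    simp only [Set.mem_insert_iff, Set.mem_singleton_iff] at hw
    rcases hw with rfl | rfl <;> rw [SetLike.mem_coe, MonoidHom.mem_ker, MonoidHom.prod_apply]
    · rw [map_pow, map_pow, sgnE_a l k hl hk2, sgnV_a l k, neg_one_sq, one_pow]
      rfl
    · rw [sgnE_u l k hl hk2, sgnV_u l k]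
      rfl
  · intro g hg
    rw [MonoidHom.mem_ker, MonoidHom.prod_apply, Prod.mk_eq_one] at hg
    obtain ⟨hg1, hg2⟩ := hg
    obtain ⟨x, y, hf | hf⟩ := normal_form l k hl g <;> subst hf
    · rw [sgnE_form1 l k hl hk2] at hg1
      have hx : Even x := by
        by_contra hodd
        rw [Int.not_even_iff_odd] at hodd
        rw [neg_one_zpow_odd hodd] at hg1
        exact absurd hg1 (by decide)
      exact mem_closE l k hx
    · exfalso
      rw [sgnV_form2 l k] at hg2
      exact absurd hg2 (by decide)

lemma closO_eq_ker :
    Subgroup.closure {a l k ^ 2, a l k * u l k} = ((sgnO hl hk2).prod sgnV).ker := by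
  apply le_antisymm
  · rw [Subgroup.closure_le]
    rintro w hw
    simp only [Set.mem_insert_iff, Set.mem_singleton_iff] at hw
    rcases hw with rfl | rfl <;> rw [SetLike.mem_coe, MonoidHom.mem_ker, MonoidHom.prod_apply]
    · rw [map_pow, map_pow, sgnO_a l k hl hk2, sgnV_a l k, neg_one_sq, one_pow]
      rfl
    · rw [map_mul, map_mul, sgnO_a l k hl hk2, sgnO_u l k hl hk2, sgnV_a l k, sgnV_u l k]
      rfl
  · intro g hg
    rw [MonoidHom.mem_ker, MonoidHom.prod_apply, Prod.mk_eq_one] at hg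
    obtain ⟨hg1, hg2⟩ := hg
    obtain ⟨x, y, hf | hf⟩ := normal_form l k hl g <;> subst hf
    · rw [sgnO_form1 l k hl hk2] at hg1
      have hxy : Even (x - y) := by
        rcases Int.even_or_odd x with hx | hx <;> rcases Int.even_or_odd y with hy | hy
        · obtain ⟨c, hc⟩ := hx; obtain ⟨d, hd⟩ := hy; exact ⟨c - d, by omega⟩
        · exfalso
          rw [neg_one_zpow_even hx, neg_one_zpow_odd hy, one_mul] at hg1
          exact absurd hg1 (by decide)
        · exfalso
          rw [neg_one_zpow_odd hx, neg_one_zpow_even hy, mul_one] at hg1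
          exact absurd hg1 (by decide)
        · obtain ⟨c, hc⟩ := hx; obtain ⟨d, hd⟩ := hy; exact ⟨c - d, by omega⟩
      exact mem_closO l k hl hxy
    · exfalso
      rw [sgnV_form2 l k] at hg2
      exact absurd hg2 (by decide)

lemma ker_index_four (φ : G l k →* ℤˣ × ℤˣ) (h1 : φ (a l k) = (-1, 1))
    (h2 : φ (v l k) = (1, -1)) : φ.ker.index = 4 := by
  have hsurj : Function.Surjective φ := by
    rintro ⟨z1, z2⟩
    rcases Int.units_eq_one_or z1 with rfl | rfl <;> rcases Int.units_eq_one_or z2 with rfl | rfl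
    · exact ⟨1, by rw [map_one]; rfl⟩
    · exact ⟨v l k, h2⟩
    · exact ⟨a l k, h1⟩
    · exact ⟨a l k * v l k, by rw [map_mul, h1, h2]; decide⟩
  rw [Subgroup.index_ker, MonoidHom.range_eq_top.mpr hsurj, Subgroup.card_top,
    Nat.card_prod, Nat.card_eq_fintype_card, Fintype.card_units_int]

end kers

end ZkDl

open ZkDl

theorem centralizer_odd (l k : ℕ) (hl : 3 ≤ l) (hk : 4 ∣ k) (s i : ℤ) (hi : Odd i) :
    (Even s → Subgroup.centralizer {a l k ^ s * u l k ^ i} =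
      Subgroup.closure {a l k ^ 2, u l k}) ∧
    (Odd s → Subgroup.centralizer {a l k ^ s * u l k ^ i} =
      Subgroup.closure {a l k ^ 2, a l k * u l k}) ∧
    IsMulCommutative (Subgroup.centralizer {a l k ^ s * u l k ^ i}) ∧
    (Subgroup.centralizer {a l k ^ s * u l k ^ i}).Normal ∧
    (Subgroup.centralizer {a l k ^ s * u l k ^ i}).index = 4 := by
  have hk2 : 2 ∣ k := dvd_trans (by norm_num) hk
  have hcommE : ∀ x ∈ ({a l k ^ 2, u l k} : Set (G l k)), ∀ y ∈ ({a l k ^ 2, u l k} : Set (G l k)),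
      x * y = y * x := by
    intro x hx y hy
    simp only [Set.mem_insert_iff, Set.mem_singleton_iff] at hx hy
    rcases hx with rfl | rfl <;> rcases hy with rfl | rfl
    · rfl
    · exact comm_a2_u l k hl
    · exact (comm_a2_u l k hl).symm
    · rfl
  have hcommO : ∀ x ∈ ({a l k ^ 2, a l k * u l k} : Set (G l k)),
      ∀ y ∈ ({a l k ^ 2, a l k * u l k} : Set (G l k)), x * y = y * x := by
    intro x hx y hy
    simp only [Set.mem_insert_iff, Set.mem_singleton_iff] at hx hy
    rcases hx with rfl | rfl <;> rcases hy with rfl | rfl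
    · rfl
    · exact comm_a2_au l k hl
    · exact (comm_a2_au l k hl).symm
    · rfl
  have hφEa : ((sgnE hl hk2).prod sgnV) (a l k) = (-1, 1) := by
    rw [MonoidHom.prod_apply, sgnE_a l k hl hk2, sgnV_a l k]
  have hφEv : ((sgnE hl hk2).prod sgnV) (v l k) = (1, -1) := by
    rw [MonoidHom.prod_apply, sgnE_v l k hl hk2, sgnV_v l k]
  have hφOa : ((sgnO hl hk2).prod sgnV) (a l k) = (-1, 1) := by
    rw [MonoidHom.prod_apply, sgnO_a l k hl hk2, sgnV_a l k]
  have hφOv : ((sgnO hl hk2).prod sgnV) (v l k) = (1, -1) := by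
    rw [MonoidHom.prod_apply, sgnO_v l k hl hk2, sgnV_v l k]
  refine ⟨fun hs => cent_even l k hl hk s i hs hi,
    fun hs => cent_odd l k hl hk s i hs hi, ?_, ?_, ?_⟩
  · rcases Int.even_or_odd s with hs | hs
    · rw [cent_even l k hl hk s i hs hi]
      exact closure_comm _ hcommE
    · rw [cent_odd l k hl hk s i hs hi]
      exact closure_comm _ hcommO
  · rcases Int.even_or_odd s with hs | hs
    · rw [cent_even l k hl hk s i hs hi, closE_eq_ker l k hl hk2]
      exact MonoidHom.normal_ker _
    · rw [cent_odd l k hl hk s i hs hi, closO_eq_ker l k hl hk2]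
      exact MonoidHom.normal_ker _
  · rcases Int.even_or_odd s with hs | hs
    · rw [cent_even l k hl hk s i hs hi, closE_eq_ker l k hl hk2]
      exact ker_index_four l k ((sgnE hl hk2).prod sgnV) hφEa hφEv
    · rw [cent_odd l k hl hk s i hs hi, closO_eq_ker l k hl hk2]
      exact ker_index_four l k ((sgnO hl hk2).prod sgnV) hφOa hφOv
end

section
/- For integers x, y and r, i with m ∈ ℕ: a^x u^y ∈ G_m(a^r u^i) if and only if k | m·i and 2^l | m·r, where G_m(g) = { a ∈ G : Π_{j=0}^{m-1} a^(-j) g a^j = 1 }. -/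
open ZkDl

/-- The set `G_m(g) = { h ∈ G : ∏_{j=0}^{m-1} h^{-j} g h^j = 1 }`. -/
def Gm (l k : ℕ) (g : G l k) (m : ℕ) : Set (G l k) :=
  {h : G l k | ((List.range m).map (fun j => h ^ (-(j : ℤ)) * g * h ^ (j : ℤ))).prod = 1}

/-! ### Auxiliary material -/

namespace ZkDlAux

/-! #### The affine group over `ZMod n` -/

@[ext]
structure Aff (n : ℕ) where
  b : ZMod n
  c : (ZMod n)ˣ

namespace Aff

variable {n : ℕ}

instance : Mul (Aff n) := ⟨fun p q => ⟨p.b + p.c * q.b, p.c * q.c⟩⟩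
instance : One (Aff n) := ⟨⟨0, 1⟩⟩
instance : Inv (Aff n) := ⟨fun p => ⟨-((p.c⁻¹ : (ZMod n)ˣ) * p.b), p.c⁻¹⟩⟩

@[simp] lemma mul_b (p q : Aff n) : (p * q).b = p.b + p.c * q.b := rfl
@[simp] lemma mul_c (p q : Aff n) : (p * q).c = p.c * q.c := rfl
@[simp] lemma one_b : (1 : Aff n).b = 0 := rfl
@[simp] lemma one_c : (1 : Aff n).c = 1 := rfl
@[simp] lemma inv_b (p : Aff n) : (p⁻¹).b = -((p.c⁻¹ : (ZMod n)ˣ) * p.b) := rfl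
@[simp] lemma inv_c (p : Aff n) : (p⁻¹).c = p.c⁻¹ := rfl

instance : Group (Aff n) where
  mul_assoc p q s := by ext <;> simp [Units.val_mul] <;> ring
  one_mul p := by ext <;> simp
  mul_one p := by ext <;> simp
  inv_mul_cancel p := by ext <;> simp [Units.val_mul]

lemma trans_zpow (s : ℤ) : (⟨1, 1⟩ : Aff n) ^ s = ⟨(s : ZMod n), 1⟩ := by
  induction s using Int.induction_on with
  | zero => ext <;> simp
  | succ j ih =>
    rw [zpow_add_one, ih]
    ext <;> push_cast <;> simp
  | pred j ih =>
    rw [zpow_sub_one, ih]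
    ext <;> push_cast <;> simp <;> ring_nf

lemma diag_zpow (U : (ZMod n)ˣ) (s : ℤ) : (⟨0, U⟩ : Aff n) ^ s = ⟨0, U ^ s⟩ := by
  induction s using Int.induction_on with
  | zero => ext <;> simp
  | succ j ih => rw [zpow_add_one, ih, zpow_add_one]; ext <;> simp
  | pred j ih => rw [zpow_sub_one, ih, zpow_sub_one]; ext <;> simp

end Aff

/-! #### Arithmetic helpers -/

lemma odd_dvd (e : ℕ) (s w : ℤ) (hw : Odd w) : (2 : ℤ) ^ e ∣ s * w ↔ (2 : ℤ) ^ e ∣ s := by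
  obtain ⟨c, rfl⟩ := hw
  constructor
  · intro h
    have hc : IsCoprime ((2 : ℤ) ^ e) (2 * c + 1) :=
      IsCoprime.pow_left ⟨-c, 1, by ring⟩
    exact hc.dvd_of_dvd_mul_right h
  · exact fun h => h.mul_right _

/-- `E l t` : the multiplier `n₁^t mod 2^l` (only the parity of `t` matters). -/
def E (l : ℕ) (t : ℤ) : ℤ := if Even t then 1 else 2 ^ (l - 1) + 1

lemma E_even {l : ℕ} {t : ℤ} (h : Even t) : E l t = 1 := if_pos h

lemma E_odd {l : ℕ} {t : ℤ} (h : Odd t) : E l t = 2 ^ (l - 1) + 1 :=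
  if_neg (by simpa [Int.even_iff, Int.odd_iff] using h)

lemma sum_E_even {l : ℕ} {z : ℤ} (hz : Even z) (m : ℕ) :
    (∑ j ∈ Finset.range m, E l (z * (j : ℤ))) = m := by
  have : ∀ j ∈ Finset.range m, E l (z * (j : ℤ)) = 1 := fun j _ => E_even (hz.mul_right _)
  rw [Finset.sum_congr rfl this]
  simp

lemma sum_E_odd {l : ℕ} {z : ℤ} (hz : Odd z) (m : ℕ) :
    (∑ j ∈ Finset.range m, E l (z * (j : ℤ))) = m + (m / 2 : ℕ) * 2 ^ (l - 1) := by
  induction m with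
  | zero => simp
  | succ m ih =>
    rw [Finset.sum_range_succ, ih]
    rcases Nat.even_or_odd m with hm | hm
    · have h1 : Even (z * (m : ℤ)) := by
        exact (Int.even_coe_nat m |>.mpr hm).mul_left z
      have hm' := Nat.even_iff.mp hm
      have h2 : (m + 1) / 2 = m / 2 := by omega
      rw [E_even h1, h2]
      push_cast
      ring
    · have h1 : Odd (z * (m : ℤ)) := hz.mul (by exact_mod_cast hm.natCast (R := ℤ))
      have hm' := Nat.odd_iff.mp hm
      have h2 : (m + 1) / 2 = m / 2 + 1 := by omega
      rw [E_odd h1, h2]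
      push_cast
      ring

/-- The key arithmetic equivalence. -/
lemma arith (l : ℕ) (hl : 3 ≤ l) (k : ℕ) (hk : 4 ∣ k) (x y r i : ℤ) (m : ℕ)
    (hmi : (k : ℤ) ∣ (m : ℤ) * i) :
    ((2 ^ l : ℤ) ∣ (r - E l (i - y) * x) * (∑ j ∈ Finset.range m, E l ((i - y) * (j : ℤ)))
        + E l ((i - y) * (m : ℤ)) * x * (∑ j ∈ Finset.range m, E l (y * (j : ℤ)))) ↔
      (2 ^ l : ℤ) ∣ (m : ℤ) * r := by
  obtain ⟨l', rfl⟩ : ∃ l', l = l' + 3 := ⟨l - 3, by omega⟩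
  have hlsub : l' + 3 - 1 = l' + 2 := rfl
  have h4mi : (4 : ℤ) ∣ (m : ℤ) * i := dvd_trans (by exact_mod_cast hk) hmi
  rcases Int.even_or_odd (i - y) with hz | hz
  · -- z even
    have hEz : E (l' + 3) (i - y) = 1 := E_even hz
    have hEzm : E (l' + 3) ((i - y) * (m : ℤ)) = 1 := E_even (hz.mul_right _)
    have hA := sum_E_even (l := l' + 3) hz m
    rw [hEz, hEzm, hA]
    rcases Int.even_or_odd y with hy | hy
    · have hB := sum_E_even (l := l' + 3) hy m
      rw [hB, show (r - 1 * x) * (m : ℤ) + 1 * x * (m : ℤ) = (m : ℤ) * r from by ring]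
    · -- y odd, so i odd, so 4 ∣ m
      have hi : Odd i := by
        obtain ⟨c, hc⟩ := hz; obtain ⟨d, hd⟩ := hy; exact ⟨c + d, by omega⟩
      have hm4 : (4 : ℕ) ∣ m := by
        have h2 : (2 : ℤ) ^ 2 ∣ (m : ℤ) := by
          rw [← odd_dvd 2 (m : ℤ) i hi]
          exact_mod_cast h4mi
        exact_mod_cast (by exact_mod_cast h2 : ((4 : ℕ) : ℤ) ∣ (m : ℤ))
      obtain ⟨t, rfl⟩ := hm4
      have hB := sum_E_odd (l := l' + 3) hy (4 * t)
      rw [hB, hlsub, show (4 * t) / 2 = 2 * t from by omega]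
      rw [show (r - 1 * x) * ((4 * t : ℕ) : ℤ)
            + 1 * x * (((4 * t : ℕ) : ℤ) + ((2 * t : ℕ) : ℤ) * 2 ^ (l' + 2))
          = 2 ^ (l' + 3) * (x * (t : ℤ)) + ((4 * t : ℕ) : ℤ) * r from by push_cast; ring,
        dvd_add_right (dvd_mul_right _ _)]
  · -- z odd
    have hEz : E (l' + 3) (i - y) = 2 ^ (l' + 2) + 1 := by rw [E_odd hz, hlsub]
    have hA := sum_E_odd (l := l' + 3) hz m
    rw [hEz, hA, hlsub]
    rcases Nat.even_or_odd m with hm | hm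
    · -- m even
      obtain ⟨s, rfl⟩ : ∃ s, m = 2 * s := ⟨m / 2, by rw [Nat.even_iff] at hm; omega⟩
      have h2s : Even ((2 * s : ℕ) : ℤ) := ⟨(s : ℤ), by push_cast; ring⟩
      have hEzm : E (l' + 3) ((i - y) * ((2 * s : ℕ) : ℤ)) = 1 :=
        E_even (h2s.mul_left (i - y))
      rw [hEzm, show (2 * s) / 2 = s from by omega]
      rcases Int.even_or_odd y with hy | hy
      · -- y even, so i odd, so 4 ∣ m
        have hi : Odd i := by
          obtain ⟨c, hc⟩ := hz; obtain ⟨d, hd⟩ := hy; exact ⟨c + d, by omega⟩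
        have hm4 : (4 : ℕ) ∣ 2 * s := by
          have h2 : (2 : ℤ) ^ 2 ∣ ((2 * s : ℕ) : ℤ) := by
            rw [← odd_dvd 2 _ i hi]
            exact_mod_cast h4mi
          exact_mod_cast (by exact_mod_cast h2 : ((4 : ℕ) : ℤ) ∣ ((2 * s : ℕ) : ℤ))
        obtain ⟨t, rfl⟩ : ∃ t, s = 2 * t := ⟨s / 2, by omega⟩
        have hB := sum_E_even (l := l' + 3) hy (2 * (2 * t))
        rw [hB]
        rw [show (r - (2 ^ (l' + 2) + 1) * x) * (((2 * (2 * t) : ℕ) : ℤ)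
                + ((2 * t : ℕ) : ℤ) * 2 ^ (l' + 2))
              + 1 * x * ((2 * (2 * t) : ℕ) : ℤ)
            = 2 ^ (l' + 3) * ((t : ℤ) * r - 3 * t * x - t * 2 ^ (l' + 2) * x)
              + ((2 * (2 * t) : ℕ) : ℤ) * r from by push_cast; ring,
          dvd_add_right (dvd_mul_right _ _)]
      · -- y odd (m even)
        have hB := sum_E_odd (l := l' + 3) hy (2 * s)
        rw [hB, hlsub, show (2 * s) / 2 = s from by omega]
        have hw : Odd (1 + (2 : ℤ) ^ (l' + 1)) := ⟨2 ^ l', by ring⟩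
        rw [show (r - (2 ^ (l' + 2) + 1) * x) * (((2 * s : ℕ) : ℤ) + ((s : ℕ) : ℤ) * 2 ^ (l' + 2))
              + 1 * x * (((2 * s : ℕ) : ℤ) + ((s : ℕ) : ℤ) * 2 ^ (l' + 2))
            = 2 ^ (l' + 3) * (-((s : ℤ) * x) * (1 + 2 ^ (l' + 1)))
              + ((2 * s : ℕ) : ℤ) * r * (1 + 2 ^ (l' + 1)) from by push_cast; ring,
          dvd_add_right (dvd_mul_right _ _), odd_dvd _ _ _ hw]
    · -- m odd; y odd, i even; here B = A and everything collapses
      have hy : Odd y := by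
        rcases Int.even_or_odd i with h2 | h2
        · obtain ⟨c, hc⟩ := hz; obtain ⟨e, he⟩ := h2; exact ⟨e - c - 1, by omega⟩
        · -- i odd, m odd: contradicts 4 ∣ m i
          exfalso
          have hmm : Odd ((m : ℕ) : ℤ) := by exact_mod_cast hm
          have hmo : Odd ((m : ℤ) * i) := hmm.mul h2
          obtain ⟨c, hc⟩ := h4mi
          obtain ⟨d, hd⟩ := hmo
          omega
      obtain ⟨s, rfl⟩ : ∃ s, m = 2 * s + 1 := ⟨m / 2, by rw [Nat.odd_iff] at hm; omega⟩
      have hEzm : E (l' + 3) ((i - y) * ((2 * s + 1 : ℕ) : ℤ)) = 2 ^ (l' + 2) + 1 := by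
        have hmm : Odd ((2 * s + 1 : ℕ) : ℤ) := ⟨(s : ℤ), by push_cast; ring⟩
        rw [E_odd (hz.mul hmm), hlsub]
      have hB := sum_E_odd (l := l' + 3) hy (2 * s + 1)
      rw [hEzm, hB, hlsub, show (2 * s + 1) / 2 = s from by omega]
      have hodds : Odd (((2 * s + 1 : ℕ) : ℤ) + ((s : ℕ) : ℤ) * 2 ^ (l' + 2)) :=
        ⟨(s : ℤ) + s * 2 ^ (l' + 1), by push_cast; ring⟩
      rw [show (r - (2 ^ (l' + 2) + 1) * x) * (((2 * s + 1 : ℕ) : ℤ) + ((s : ℕ) : ℤ) * 2 ^ (l' + 2))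
            + (2 ^ (l' + 2) + 1) * x * (((2 * s + 1 : ℕ) : ℤ) + ((s : ℕ) : ℤ) * 2 ^ (l' + 2))
          = r * (((2 * s + 1 : ℕ) : ℤ) + ((s : ℕ) : ℤ) * 2 ^ (l' + 2)) from by ring,
        odd_dvd _ _ _ hodds, mul_comm ((2 * s + 1 : ℕ) : ℤ) r,
        odd_dvd _ _ _ (⟨(s : ℤ), by push_cast; ring⟩ : Odd ((2 * s + 1 : ℕ) : ℤ))]


/-! #### Generic product identity -/

lemma prod_conj {Γ : Type*} [Group Γ] (g h : Γ) (m : ℕ) :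
    ((List.range m).map (fun j => h ^ (-(j : ℤ)) * g * h ^ (j : ℤ))).prod
      = (g * h⁻¹) ^ m * h ^ m := by
  have h2 : (do let a ← List.range m; pure ((a : ℕ) : ℤ))
      = (List.range m).map (fun a : ℕ => (a : ℤ)) := by
    induction (List.range m) with
    | nil => rfl
    | cons b L ih => simpa [List.flatMap_cons] using ih
  rw [h2, List.map_map]
  clear h2
  simp only [Function.comp_def]
  induction m with
  | zero => simp
  | succ m ih =>
    rw [List.range_succ, List.map_append, List.prod_append, ih]
    simp only [List.map_cons, List.map_nil, List.prod_cons, List.prod_nil, mul_one]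
    rw [pow_succ (g * h⁻¹), pow_succ h, ← zpow_natCast h m, ← zpow_natCast (g * h⁻¹) m]
    group

/-! #### Basic relations in `G l k` -/

lemma rel_one (l k : ℕ) {w : FreeGroup (Fin 3)} (hw : w ∈ rels l k) :
    PresentedGroup.mk (rels l k) w = 1 :=
  (QuotientGroup.eq_one_iff w).mpr (Subgroup.subset_normalClosure hw)

lemma apow (l k : ℕ) : a l k ^ (2 ^ l) = 1 := by
  have h := rel_one l k (show FreeGroup.of 0 ^ 2 ^ l ∈ rels l k from Set.mem_insert _ _)
  rw [map_pow] at h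
  exact h

lemma upow (l k : ℕ) : u l k ^ k = 1 := by
  have h := rel_one l k (show FreeGroup.of 1 ^ k ∈ rels l k from
    Set.mem_insert_iff.mpr (Or.inr (Set.mem_insert _ _)))
  rw [map_pow] at h
  exact h

lemma conj1 (l k : ℕ) : u l k * a l k * (u l k)⁻¹ = a l k ^ (n₁ l) := by
  have h := rel_one l k (show FreeGroup.of 1 * FreeGroup.of 0 * (FreeGroup.of 1)⁻¹
      * (FreeGroup.of 0 ^ n₁ l)⁻¹ ∈ rels l k from
    Set.mem_insert_iff.mpr (Or.inr (Set.mem_insert_iff.mpr (Or.inr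
      (Set.mem_insert_iff.mpr (Or.inr (Set.mem_insert _ _)))))))
  simp only [map_mul, map_inv, map_pow] at h
  exact (mul_inv_eq_one.mp h)

lemma azpow_congr (l k : ℕ) {s t : ℤ} (hst : (2 ^ l : ℤ) ∣ s - t) :
    a l k ^ s = a l k ^ t := by
  obtain ⟨c, hc⟩ := hst
  have h1 : a l k ^ ((2 ^ l : ℕ) : ℤ) = 1 := by
    rw [zpow_natCast, apow]
  rw [show s = t + ((2 ^ l : ℕ) : ℤ) * c from by push_cast; linarith, zpow_add, zpow_mul, h1,
    one_zpow, mul_one]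

lemma uzpow_one (l k : ℕ) {t : ℤ} (ht : (k : ℤ) ∣ t) : u l k ^ t = 1 := by
  obtain ⟨c, hc⟩ := ht
  have h1 : u l k ^ ((k : ℕ) : ℤ) = 1 := by rw [zpow_natCast, upow]
  rw [hc, zpow_mul, h1, one_zpow]

lemma conj_z (l k : ℕ) (s : ℤ) :
    u l k * a l k ^ s * (u l k)⁻¹ = a l k ^ ((n₁ l : ℤ) * s) := by
  have h := map_zpow (MulAut.conj (u l k)) (a l k) s
  simp only [MulAut.conj_apply] at h
  rw [h, conj1, ← zpow_natCast (a l k) (n₁ l), ← zpow_mul]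

lemma n1_int (l' : ℕ) : (n₁ (l' + 3) : ℤ) = 2 ^ (l' + 2) + 1 := by
  have e : l' + 3 - 1 = l' + 2 := rfl
  rw [n₁, e]
  push_cast
  ring

lemma E_odd' {l' : ℕ} {t : ℤ} (h : Odd t) : E (l' + 3) t = (n₁ (l' + 3) : ℤ) := by
  rw [E_odd h, n1_int]
  rfl

lemma nsq_int (l' : ℕ) (k : ℕ) (s : ℤ) :
    a (l' + 3) k ^ ((n₁ (l' + 3) : ℤ) * ((n₁ (l' + 3) : ℤ) * s)) = a (l' + 3) k ^ s := by
  apply azpow_congr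
  refine ⟨(2 ^ (l' + 1) + 1) * s, ?_⟩
  rw [n1_int]
  ring

lemma inv_conj_z (l' k : ℕ) (s : ℤ) :
    (u (l' + 3) k)⁻¹ * a (l' + 3) k ^ s * u (l' + 3) k
      = a (l' + 3) k ^ ((n₁ (l' + 3) : ℤ) * s) := by
  have h := conj_z (l' + 3) k ((n₁ (l' + 3) : ℤ) * s)
  rw [nsq_int] at h
  rw [← h]
  group

lemma ukey (l' k : ℕ) (t s : ℤ) :
    u (l' + 3) k ^ t * a (l' + 3) k ^ s
      = a (l' + 3) k ^ (E (l' + 3) t * s) * u (l' + 3) k ^ t := by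
  induction t using Int.induction_on with
  | zero => simp [E_even (Even.zero)]
  | succ j ih =>
    have hstep : ∀ w : ℤ, a (l' + 3) k ^ ((n₁ (l' + 3) : ℤ) * (E (l' + 3) (j : ℤ) * w))
        = a (l' + 3) k ^ (E (l' + 3) ((j : ℤ) + 1) * w) := by
      intro w
      rcases Int.even_or_odd (j : ℤ) with hj | hj
      · rw [E_even hj, E_odd' (hj.add_one), one_mul]
      · rw [E_odd' hj, E_even (Int.even_add_one.mpr (Int.not_even_iff_odd.mpr hj)), one_mul]
        exact nsq_int l' k w
    calc u (l' + 3) k ^ ((j : ℤ) + 1) * a (l' + 3) k ^ s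
        = u (l' + 3) k * (u (l' + 3) k ^ (j : ℤ) * a (l' + 3) k ^ s) := by
          rw [zpow_add_one]
          group
      _ = u (l' + 3) k * (a (l' + 3) k ^ (E (l' + 3) (j : ℤ) * s) * u (l' + 3) k ^ (j : ℤ)) := by
          rw [ih]
      _ = (u (l' + 3) k * a (l' + 3) k ^ (E (l' + 3) (j : ℤ) * s) * (u (l' + 3) k)⁻¹)
            * (u (l' + 3) k * u (l' + 3) k ^ (j : ℤ)) := by group
      _ = a (l' + 3) k ^ ((n₁ (l' + 3) : ℤ) * (E (l' + 3) (j : ℤ) * s))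
            * (u (l' + 3) k * u (l' + 3) k ^ (j : ℤ)) := by rw [conj_z]
      _ = a (l' + 3) k ^ (E (l' + 3) ((j : ℤ) + 1) * s) * u (l' + 3) k ^ ((j : ℤ) + 1) := by
          rw [hstep s, zpow_add_one]
          group
  | pred j ih =>
    have hstep : ∀ w : ℤ, a (l' + 3) k ^ ((n₁ (l' + 3) : ℤ) * (E (l' + 3) (-(j : ℤ)) * w))
        = a (l' + 3) k ^ (E (l' + 3) (-(j : ℤ) - 1) * w) := by
      intro w
      rcases Int.even_or_odd (-(j : ℤ)) with hj | hj
      · obtain ⟨c, hc⟩ := hj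
        rw [E_even ⟨c, hc⟩, E_odd' ⟨c - 1, by omega⟩, one_mul]
      · obtain ⟨c, hc⟩ := hj
        rw [E_odd' ⟨c, hc⟩, E_even ⟨c, by omega⟩, one_mul]
        exact nsq_int l' k w
    calc u (l' + 3) k ^ (-(j : ℤ) - 1) * a (l' + 3) k ^ s
        = (u (l' + 3) k)⁻¹ * (u (l' + 3) k ^ (-(j : ℤ)) * a (l' + 3) k ^ s) := by
          rw [zpow_sub_one]
          group
      _ = (u (l' + 3) k)⁻¹
            * (a (l' + 3) k ^ (E (l' + 3) (-(j : ℤ)) * s) * u (l' + 3) k ^ (-(j : ℤ))) := by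
          rw [ih]
      _ = ((u (l' + 3) k)⁻¹ * a (l' + 3) k ^ (E (l' + 3) (-(j : ℤ)) * s) * u (l' + 3) k)
            * ((u (l' + 3) k)⁻¹ * u (l' + 3) k ^ (-(j : ℤ))) := by group
      _ = a (l' + 3) k ^ ((n₁ (l' + 3) : ℤ) * (E (l' + 3) (-(j : ℤ)) * s))
            * ((u (l' + 3) k)⁻¹ * u (l' + 3) k ^ (-(j : ℤ))) := by rw [inv_conj_z]
      _ = a (l' + 3) k ^ (E (l' + 3) (-(j : ℤ) - 1) * s) * u (l' + 3) k ^ (-(j : ℤ) - 1) := by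
          rw [hstep s, zpow_sub_one]
          group

lemma pow_form (l' k : ℕ) (w z : ℤ) (m : ℕ) :
    (a (l' + 3) k ^ w * u (l' + 3) k ^ z) ^ m
      = a (l' + 3) k ^ (w * ∑ j ∈ Finset.range m, E (l' + 3) (z * (j : ℤ)))
        * u (l' + 3) k ^ (z * (m : ℤ)) := by
  induction m with
  | zero => simp
  | succ m ih =>
    rw [pow_succ, ih, Finset.sum_range_succ]
    rw [mul_assoc, ← mul_assoc (u (l' + 3) k ^ (z * (m : ℤ)))]
    rw [ukey l' k (z * (m : ℤ)) w]
    rw [mul_assoc, ← zpow_add, ← mul_assoc, ← zpow_add]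
    rw [show w * ((∑ j ∈ Finset.range m, E (l' + 3) (z * (j : ℤ))) + E (l' + 3) (z * (m : ℤ)))
        = w * (∑ j ∈ Finset.range m, E (l' + 3) (z * (j : ℤ))) + E (l' + 3) (z * (m : ℤ)) * w
      from by ring]
    rw [show z * (((m : ℕ) + 1 : ℕ) : ℤ) = z * (m : ℤ) + z from by push_cast; ring]


/-! #### Homomorphism to the dihedral group -/

def fd (k : ℕ) : Fin 3 → DihedralGroup k := ![1, .r 1, .sr 0]

lemma fd_rels (l k : ℕ) : ∀ w ∈ rels l k, FreeGroup.lift (fd k) w = 1 := by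
  intro w hw
  simp only [rels, Set.mem_insert_iff, Set.mem_singleton_iff] at hw
  rcases hw with rfl | rfl | rfl | rfl | rfl | rfl <;>
    simp only [map_mul, map_pow, map_inv, FreeGroup.lift_apply_of, fd,
      Matrix.cons_val_zero, Matrix.cons_val_one, Matrix.head_cons]
  · exact one_pow _
  · rw [DihedralGroup.r_one_pow]
    simp [DihedralGroup.one_def, -DihedralGroup.r_zero]
  · show (DihedralGroup.sr 0) ^ 2 = 1
    rw [pow_two, DihedralGroup.sr_mul_sr]
    simp [DihedralGroup.one_def, -DihedralGroup.r_zero]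
  · simp
  · show DihedralGroup.sr 0 * 1 * DihedralGroup.sr 0 * (1 ^ n₂ l)⁻¹ = 1
    rw [mul_one, one_pow, inv_one, mul_one, DihedralGroup.sr_mul_sr]
    simp [DihedralGroup.one_def, -DihedralGroup.r_zero]
  · show DihedralGroup.sr 0 * DihedralGroup.r 1 * DihedralGroup.sr 0 * DihedralGroup.r 1 = 1
    simp [DihedralGroup.one_def, -DihedralGroup.r_zero]

def φd (l k : ℕ) : G l k →* DihedralGroup k := PresentedGroup.toGroup (fd_rels l k)

lemma φd_a (l k : ℕ) : φd l k (a l k) = 1 := PresentedGroup.toGroup.of (fd_rels l k)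

lemma φd_u (l k : ℕ) : φd l k (u l k) = DihedralGroup.r 1 :=
  PresentedGroup.toGroup.of (fd_rels l k)

lemma r_zpow (k : ℕ) (t : ℤ) :
    (DihedralGroup.r 1 : DihedralGroup k) ^ t = DihedralGroup.r (t : ZMod k) := by
  induction t using Int.induction_on with
  | zero => simp [DihedralGroup.one_def, -DihedralGroup.r_zero]
  | succ j ih =>
    rw [zpow_add_one, ih, DihedralGroup.r_mul_r]
    norm_cast
  | pred j ih =>
    rw [zpow_sub_one, ih, show ((DihedralGroup.r 1 : DihedralGroup k))⁻¹
      = DihedralGroup.r (-1) from rfl, DihedralGroup.r_mul_r]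
    norm_cast

/-! #### Homomorphism to the affine group -/

lemma two_pow_zero (l' : ℕ) : ((2 : ZMod (2 ^ (l' + 3)))) ^ (l' + 3) = 0 := by
  have h := ZMod.natCast_self (2 ^ (l' + 3))
  push_cast at h
  exact h

lemma n1_zmod (l' : ℕ) :
    ((n₁ (l' + 3) : ℕ) : ZMod (2 ^ (l' + 3))) * ((n₁ (l' + 3) : ℕ) : ZMod (2 ^ (l' + 3))) = 1 := by
  have e : l' + 3 - 1 = l' + 2 := rfl
  rw [n₁, e]
  push_cast
  linear_combination (2 ^ (l' + 1) + 1 : ZMod (2 ^ (l' + 3))) * two_pow_zero l'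

lemma n2_zmod (l' : ℕ) :
    ((n₂ (l' + 3) : ℕ) : ZMod (2 ^ (l' + 3))) * ((n₂ (l' + 3) : ℕ) : ZMod (2 ^ (l' + 3))) = 1 := by
  have e : l' + 3 - 1 = l' + 2 := rfl
  rw [n₂, e, Nat.cast_sub Nat.one_le_two_pow]
  push_cast
  linear_combination (2 ^ (l' + 1) - 1 : ZMod (2 ^ (l' + 3))) * two_pow_zero l'

def Un (l' : ℕ) : (ZMod (2 ^ (l' + 3)))ˣ :=
  ⟨((n₁ (l' + 3) : ℕ) : ZMod (2 ^ (l' + 3))), ((n₁ (l' + 3) : ℕ) : ZMod (2 ^ (l' + 3))),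
    n1_zmod l', n1_zmod l'⟩

def Vn (l' : ℕ) : (ZMod (2 ^ (l' + 3)))ˣ :=
  ⟨((n₂ (l' + 3) : ℕ) : ZMod (2 ^ (l' + 3))), ((n₂ (l' + 3) : ℕ) : ZMod (2 ^ (l' + 3))),
    n2_zmod l', n2_zmod l'⟩

@[simp] lemma Un_val (l' : ℕ) : ((Un l' : (ZMod (2 ^ (l' + 3)))ˣ) : ZMod (2 ^ (l' + 3)))
    = ((n₁ (l' + 3) : ℕ) : ZMod (2 ^ (l' + 3))) := rfl

@[simp] lemma Un_inv_val (l' : ℕ) : (((Un l')⁻¹ : (ZMod (2 ^ (l' + 3)))ˣ) : ZMod (2 ^ (l' + 3)))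
    = ((n₁ (l' + 3) : ℕ) : ZMod (2 ^ (l' + 3))) := rfl

@[simp] lemma Vn_val (l' : ℕ) : ((Vn l' : (ZMod (2 ^ (l' + 3)))ˣ) : ZMod (2 ^ (l' + 3)))
    = ((n₂ (l' + 3) : ℕ) : ZMod (2 ^ (l' + 3))) := rfl

@[simp] lemma Vn_inv_val (l' : ℕ) : (((Vn l')⁻¹ : (ZMod (2 ^ (l' + 3)))ˣ) : ZMod (2 ^ (l' + 3)))
    = ((n₂ (l' + 3) : ℕ) : ZMod (2 ^ (l' + 3))) := rfl

lemma Un_sq (l' : ℕ) : Un l' ^ 2 = 1 := by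
  ext
  rw [pow_two]
  simpa using n1_zmod l'

lemma Vn_sq (l' : ℕ) : Vn l' ^ 2 = 1 := by
  ext
  rw [pow_two]
  simpa using n2_zmod l'

lemma Aff.trans_pow {n : ℕ} (m : ℕ) : (⟨1, 1⟩ : Aff n) ^ m = ⟨(m : ZMod n), 1⟩ := by
  rw [← zpow_natCast, Aff.trans_zpow]
  ext <;> simp

lemma Aff.diag_pow {n : ℕ} (U : (ZMod n)ˣ) (m : ℕ) : (⟨0, U⟩ : Aff n) ^ m = ⟨0, U ^ m⟩ := by
  rw [← zpow_natCast, Aff.diag_zpow, zpow_natCast]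

def fa (l' : ℕ) : Fin 3 → Aff (2 ^ (l' + 3)) := ![⟨1, 1⟩, ⟨0, Un l'⟩, ⟨0, Vn l'⟩]

lemma fa_rels (l' k : ℕ) (hk : 4 ∣ k) :
    ∀ w ∈ rels (l' + 3) k, FreeGroup.lift (fa l') w = 1 := by
  intro w hw
  simp only [rels, Set.mem_insert_iff, Set.mem_singleton_iff] at hw
  rcases hw with rfl | rfl | rfl | rfl | rfl | rfl <;>
    simp only [map_mul, map_pow, map_inv, FreeGroup.lift_apply_of, fa,
      Matrix.cons_val_zero, Matrix.cons_val_one, Matrix.head_cons]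
  · rw [Aff.trans_pow]
    ext <;> simp
  · rw [Aff.diag_pow]
    obtain ⟨c, rfl⟩ := hk
    rw [show 4 * c = 2 * (2 * c) from by ring, pow_mul, Un_sq, one_pow]
    ext <;> simp
  · show (⟨0, Vn l'⟩ : Aff (2 ^ (l' + 3))) ^ 2 = 1
    rw [Aff.diag_pow, Vn_sq]
    ext <;> simp
  · rw [Aff.trans_pow]
    ext <;> simp
  · show (⟨0, Vn l'⟩ : Aff (2 ^ (l' + 3))) * ⟨1, 1⟩ * ⟨0, Vn l'⟩
        * ((⟨1, 1⟩ : Aff (2 ^ (l' + 3))) ^ n₂ (l' + 3))⁻¹ = 1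
    rw [Aff.trans_pow]
    ext
    · simp [n2_zmod l']
    · simp only [Aff.mul_c, Aff.inv_c, Aff.one_c, Units.val_mul, Vn_val, Units.val_one,
        inv_one, mul_one, one_mul]
      exact n2_zmod l'
  · show (⟨0, Vn l'⟩ : Aff (2 ^ (l' + 3))) * ⟨0, Un l'⟩ * ⟨0, Vn l'⟩ * ⟨0, Un l'⟩ = 1
    ext
    · simp
    · simp only [Aff.mul_c, Aff.one_c, Units.val_mul, Un_val, Vn_val, Units.val_one]
      linear_combination (((n₁ (l' + 3) : ℕ) : ZMod (2 ^ (l' + 3)))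
          * ((n₁ (l' + 3) : ℕ) : ZMod (2 ^ (l' + 3)))) * n2_zmod l' + n1_zmod l'

def φa (l' k : ℕ) (hk : 4 ∣ k) : G (l' + 3) k →* Aff (2 ^ (l' + 3)) :=
  PresentedGroup.toGroup (fa_rels l' k hk)

/-! #### The triviality criterion -/

lemma triv_iff (l' k : ℕ) (hk : 4 ∣ k) (S T : ℤ) :
    a (l' + 3) k ^ S * u (l' + 3) k ^ T = 1 ↔
      ((2 ^ (l' + 3) : ℤ) ∣ S ∧ (k : ℤ) ∣ T) := by
  constructor
  · intro h
    constructor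
    · have hA := congrArg (φa l' k hk) h
      rw [map_mul, map_zpow, map_zpow, map_one] at hA
      rw [show φa l' k hk (a (l' + 3) k) = ⟨1, 1⟩ from PresentedGroup.toGroup.of _,
        show φa l' k hk (u (l' + 3) k) = ⟨0, Un l'⟩ from PresentedGroup.toGroup.of _,
        Aff.trans_zpow, Aff.diag_zpow] at hA
      have hb := congrArg Aff.b hA
      simp only [Aff.mul_b, Aff.one_b, Aff.one_c, Aff.mul_c] at hb
      have hb2 : ((S : ℤ) : ZMod (2 ^ (l' + 3))) = 0 := by simpa using hb
      have := (CharP.intCast_eq_zero_iff (ZMod (2 ^ (l' + 3))) (2 ^ (l' + 3)) S).mp hb2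
      exact_mod_cast this
    · have hD := congrArg (φd (l' + 3) k) h
      rw [map_mul, map_zpow, map_zpow, map_one, φd_a, φd_u, one_zpow, one_mul, r_zpow] at hD
      rw [DihedralGroup.one_def] at hD
      have hT : ((T : ℤ) : ZMod k) = 0 := by injection hD
      exact (CharP.intCast_eq_zero_iff (ZMod k) k T).mp hT
  · rintro ⟨h1, h2⟩
    have ha : a (l' + 3) k ^ S = 1 := by
      rw [azpow_congr (l' + 3) k (t := 0) (by simpa using h1), zpow_zero]
    rw [ha, uzpow_one (l' + 3) k h2, one_mul]

end ZkDlAux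

theorem mem_Gm_iff (l k : ℕ) (hl : 3 ≤ l) (hk : 4 ∣ k) (x y r i : ℤ) (m : ℕ) :
    a l k ^ x * u l k ^ y ∈ Gm l k (a l k ^ r * u l k ^ i) m ↔
      ((k : ℤ) ∣ (m : ℤ) * i ∧ (2 ^ l : ℤ) ∣ (m : ℤ) * r) := by
  obtain ⟨l', rfl⟩ : ∃ l', l = l' + 3 := ⟨l - 3, by omega⟩
  simp only [Gm, Set.mem_setOf_eq]
  rw [ZkDlAux.prod_conj]
  have hgh : (a (l' + 3) k ^ r * u (l' + 3) k ^ i) * (a (l' + 3) k ^ x * u (l' + 3) k ^ y)⁻¹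
      = a (l' + 3) k ^ (r - ZkDlAux.E (l' + 3) (i - y) * x) * u (l' + 3) k ^ (i - y) := by
    rw [mul_inv_rev, ← zpow_neg, ← zpow_neg]
    rw [mul_assoc, ← mul_assoc (u (l' + 3) k ^ i), ← zpow_add,
      show i + -y = i - y from by ring,
      ZkDlAux.ukey l' k (i - y) (-x),
      ← mul_assoc, ← zpow_add,
      show r + ZkDlAux.E (l' + 3) (i - y) * -x
        = r - ZkDlAux.E (l' + 3) (i - y) * x from by ring]
  rw [hgh, ZkDlAux.pow_form, ZkDlAux.pow_form]
  rw [mul_assoc, ← mul_assoc (u (l' + 3) k ^ ((i - y) * (m : ℤ))),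
    ZkDlAux.ukey l' k ((i - y) * (m : ℤ))
      (x * ∑ j ∈ Finset.range m, ZkDlAux.E (l' + 3) (y * (j : ℤ))),
    mul_assoc, ← zpow_add, ← mul_assoc, ← zpow_add]
  rw [show (i - y) * (m : ℤ) + y * (m : ℤ) = (m : ℤ) * i from by ring]
  rw [show (r - ZkDlAux.E (l' + 3) (i - y) * x)
        * (∑ j ∈ Finset.range m, ZkDlAux.E (l' + 3) ((i - y) * (j : ℤ)))
      + ZkDlAux.E (l' + 3) ((i - y) * (m : ℤ))
        * (x * ∑ j ∈ Finset.range m, ZkDlAux.E (l' + 3) (y * (j : ℤ)))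
    = (r - ZkDlAux.E (l' + 3) (i - y) * x)
        * (∑ j ∈ Finset.range m, ZkDlAux.E (l' + 3) ((i - y) * (j : ℤ)))
      + ZkDlAux.E (l' + 3) ((i - y) * (m : ℤ)) * x
        * (∑ j ∈ Finset.range m, ZkDlAux.E (l' + 3) (y * (j : ℤ)))
    from by ring]
  rw [ZkDlAux.triv_iff l' k hk]
  constructor
  · rintro ⟨h1, h2⟩
    exact ⟨h2, (ZkDlAux.arith (l' + 3) (by omega) k hk x y r i m h2).mp h1⟩
  · rintro ⟨h1, h2⟩
    exact ⟨(ZkDlAux.arith (l' + 3) (by omega) k hk x y r i m h1).mpr h2, h1⟩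
end
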